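/- arXiv:1503.03855 — 6 statements merged into one kernel-verified Lean document; each statement's English description precedes it below -/
import Mathlib

section
/- Let G be any graph on vertex set [n], and define a 3-uniform hypergraph H on [n] by: for i < j < k, the triple {i,j,k} is an edge of H if and only if ij ∈ G, ik ∈ G, and jk ∉ G. If H contains a tight cycle C_s^3 (the 3-graph on Z_s with edges {i, i+1, i+2} for all i ∈ Z_s) as a subhypergraph, then s is divisible by 3. -/
lemma aux_L {n : ℕ} (G : SimpleGraph (Fin n)) (a b c i j k : Fin n)
    (hab : a ≠ b) (hac : a ≠ c) (hbc : b ≠ c)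
    (hij : i < j) (hjk : j < k)
    (heq : ({a,b,c} : Finset (Fin n)) = {i,j,k})
    (gij : G.Adj i j) (gik : G.Adj i k) (gjk : ¬ G.Adj j k) :
    G.Adj a b ↔ ¬((c:ℕ) < a ∧ (c:ℕ) < b) := by
  have gji := gij.symm
  have gki := gik.symm
  have gkj : ¬ G.Adj k j := fun h => gjk h.symm
  have ha : a = i ∨ a = j ∨ a = k := by
    have : a ∈ ({i,j,k} : Finset (Fin n)) := by rw [← heq]; simp
    simpa using this
  have hb : b = i ∨ b = j ∨ b = k := by
    have : b ∈ ({i,j,k} : Finset (Fin n)) := by rw [← heq]; simp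
    simpa using this
  have hc : c = i ∨ c = j ∨ c = k := by
    have : c ∈ ({i,j,k} : Finset (Fin n)) := by rw [← heq]; simp
    simpa using this
  rw [Fin.lt_def] at hij hjk
  rcases ha with rfl|rfl|rfl <;> rcases hb with rfl|rfl|rfl <;> rcases hc with rfl|rfl|rfl <;>
    simp_all <;> omega

/-- `φ i` is the minimum of the triple starting at `i`. -/
def pA {n s : ℕ} (φ : ZMod s → Fin n) (i : ZMod s) : Prop :=
  ((φ i : ℕ) < φ (i+1)) ∧ ((φ i : ℕ) < φ (i+2))

/-- `φ (i+1)` is the minimum of the triple starting at `i`. -/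
def pB {n s : ℕ} (φ : ZMod s → Fin n) (i : ZMod s) : Prop :=
  ((φ (i+1) : ℕ) < φ i) ∧ ((φ (i+1) : ℕ) < φ (i+2))

/-- `φ (i+2)` is the minimum of the triple starting at `i`. -/
def pC {n s : ℕ} (φ : ZMod s → Fin n) (i : ZMod s) : Prop :=
  ((φ (i+2) : ℕ) < φ i) ∧ ((φ (i+2) : ℕ) < φ (i+1))

/-- If `G` is a graph on `[n]` and `H` is the 3-graph where, for `i < j < k`,
`{i,j,k} ∈ H` iff `ij ∈ G`, `ik ∈ G` and `jk ∉ G`, then any tight cycle `C_s^3`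
contained in `H` has length divisible by 3. -/
theorem stmt0 (n s : ℕ) (hs : 4 ≤ s) (G : SimpleGraph (Fin n))
    (H : Finset (Fin n) → Prop)
    (hH : ∀ e, H e ↔ ∃ i j k : Fin n, i < j ∧ j < k ∧ e = {i, j, k} ∧
      G.Adj i j ∧ G.Adj i k ∧ ¬ G.Adj j k)
    (φ : ZMod s → Fin n) (hinj : Function.Injective φ)
    (hcyc : ∀ i : ZMod s, H {φ i, φ (i + 1), φ (i + 2)}) :
    3 ∣ s := by
  by_contra hnd
  haveI : NeZero s := ⟨by omega⟩
  -- small nonzero constants in `ZMod s`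
  have hk0 : ∀ k : ℕ, 0 < k → k < s → ((k : ZMod s) ≠ 0) := by
    intro k hk1 hk2 h
    have : (s : ℕ) ∣ k := (ZMod.natCast_eq_zero_iff k s).mp h
    have := Nat.le_of_dvd hk1 this
    omega
  have hne : ∀ (i : ZMod s) (k l : ℕ), k < l → l - k < s → φ (i + k) ≠ φ (i + l) := by
    intro i k l hkl hls h
    have h1 : (k : ZMod s) = l := add_left_cancel (hinj h)
    have h2 : ((l - k : ℕ) : ZMod s) = 0 := by
      rw [Nat.cast_sub hkl.le, ← h1, sub_self]
    exact hk0 (l - k) (by omega) hls h2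
  -- distinctness shortcuts
  have n01 : ∀ i : ZMod s, φ i ≠ φ (i+1) := fun i => by
    simpa using hne i 0 1 (by norm_num) (by omega)
  have n02 : ∀ i : ZMod s, φ i ≠ φ (i+2) := fun i => by
    simpa using hne i 0 2 (by norm_num) (by omega)
  have n12 : ∀ i : ZMod s, φ (i+1) ≠ φ (i+2) := fun i => by
    simpa using hne i 1 2 (by norm_num) (by omega)
  have n13 : ∀ i : ZMod s, φ (i+1) ≠ φ (i+3) := fun i => by
    simpa using hne i 1 3 (by norm_num) (by omega)
  have n23 : ∀ i : ZMod s, φ (i+2) ≠ φ (i+3) := fun i => by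
    simpa using hne i 2 3 (by norm_num) (by omega)
  -- the key equivalence: φ i is the min of triple i iff φ (i+3) is the min of triple i+1
  have key : ∀ i : ZMod s, pA φ i ↔
      (((φ (i+3) : ℕ) < φ (i+1)) ∧ ((φ (i+3) : ℕ) < φ (i+2))) := by
    intro i
    obtain ⟨x, y, z, hxy, hyz, heq, gxy, gxz, gyz⟩ := (hH _).mp (hcyc i)
    have hperm : ({φ (i+1), φ (i+2), φ i} : Finset (Fin n)) = {φ i, φ (i+1), φ (i+2)} := by
      ext t; simp; tauto
    have key1 := aux_L G (φ (i+1)) (φ (i+2)) (φ i) x y z (n12 i) (n01 i).symm (n02 i).symm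
      hxy hyz (hperm.trans heq) gxy gxz gyz
    have h2 := hcyc (i+1)
    rw [show i+1+1 = i+2 from by ring, show i+1+2 = i+3 from by ring] at h2
    obtain ⟨x', y', z', hxy', hyz', heq', gxy', gxz', gyz'⟩ := (hH _).mp h2
    have key2 := aux_L G (φ (i+1)) (φ (i+2)) (φ (i+3)) x' y' z' (n12 i) (n13 i) (n23 i)
      hxy' hyz' heq' gxy' gxz' gyz'
    have := key1.symm.trans key2
    unfold pA
    constructor
    · intro h
      by_contra hc
      exact (this.mpr hc) h
    · intro h
      by_contra hc
      exact (this.mp hc) h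
  -- trichotomy
  have tri : ∀ i : ZMod s, pA φ i ∨ pB φ i ∨ pC φ i := by
    intro i
    have a' : (φ i : ℕ) ≠ φ (i+1) := fun h => n01 i (Fin.val_injective h)
    have b' : (φ i : ℕ) ≠ φ (i+2) := fun h => n02 i (Fin.val_injective h)
    have c' : (φ (i+1) : ℕ) ≠ φ (i+2) := fun h => n12 i (Fin.val_injective h)
    unfold pA pB pC
    omega
  -- transition steps
  have stepA : ∀ i : ZMod s, pA φ i → pC φ (i+1) := by
    intro i h
    unfold pC
    rw [show i+1+1 = i+2 from by ring, show i+1+2 = i+3 from by ring]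
    exact (key i).mp h
  have stepB : ∀ i : ZMod s, pB φ i → pA φ (i+1) := by
    intro i h
    unfold pA
    rw [show i+1+1 = i+2 from by ring, show i+1+2 = i+3 from by ring]
    refine ⟨h.2, ?_⟩
    by_contra hc
    have hd : (φ (i+1) : ℕ) ≠ φ (i+3) := fun hh => n13 i (Fin.val_injective hh)
    have hlt : (φ (i+3) : ℕ) < φ (i+1) := by omega
    have hA := (key i).mpr ⟨hlt, hlt.trans h.2⟩
    unfold pB at h; unfold pA at hA
    omega
  have stepC : ∀ i : ZMod s, pC φ i → pB φ (i+1) := by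
    intro i h
    unfold pB
    rw [show i+1+1 = i+2 from by ring, show i+1+2 = i+3 from by ring]
    refine ⟨h.2, ?_⟩
    by_contra hc
    have hd : (φ (i+2) : ℕ) ≠ φ (i+3) := fun hh => n23 i (Fin.val_injective hh)
    have hlt : (φ (i+3) : ℕ) < φ (i+2) := by omega
    have hA := (key i).mpr ⟨hlt.trans h.2, hlt⟩
    unfold pC at h; unfold pA at hA
    omega
  -- period-3 steps
  have e3 : ∀ i : ZMod s, i + 1 + 1 + 1 = i + 3 := fun i => by ring
  have step3A : ∀ i : ZMod s, pA φ i → pA φ (i+3) := by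
    intro i h
    have := stepB _ (stepC _ (stepA i h))
    rwa [e3] at this
  have step3B : ∀ i : ZMod s, pB φ i → pB φ (i+3) := by
    intro i h
    have := stepC _ (stepA _ (stepB i h))
    rwa [e3] at this
  have step3C : ∀ i : ZMod s, pC φ i → pC φ (i+3) := by
    intro i h
    have := stepA _ (stepB _ (stepC i h))
    rwa [e3] at this
  -- iterate
  have iter : ∀ (X : ZMod s → Prop), (∀ j, X j → X (j+3)) →
      ∀ (i : ZMod s) (m : ℕ), X i → X (i + ((3*m : ℕ) : ZMod s)) := by
    intro X hX i m h
    induction m with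
    | zero => simpa using h
    | succ m ih =>
      have : ((3*(m+1) : ℕ) : ZMod s) = ((3*m : ℕ) : ZMod s) + 3 := by push_cast; ring
      rw [this, ← add_assoc]
      exact hX _ ih
  -- since ¬ 3 ∣ s, 3 is invertible mod s, so some multiple of 3 is 1
  have cop : Nat.Coprime 3 s := (Nat.Prime.coprime_iff_not_dvd Nat.prime_three).mpr hnd
  obtain ⟨m, hm⟩ : ∃ m : ℕ, ((3*m : ℕ) : ZMod s) = 1 := by
    set u := ZMod.unitOfCoprime 3 cop with hu
    refine ⟨((u⁻¹ : (ZMod s)ˣ) : ZMod s).val, ?_⟩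
    push_cast
    rw [ZMod.natCast_val, ZMod.cast_id]
    have hcu : ((u : ZMod s)) = (3 : ZMod s) := by
      rw [hu, ZMod.coe_unitOfCoprime]; push_cast; ring
    calc (3 : ZMod s) * ((u⁻¹ : (ZMod s)ˣ) : ZMod s)
        = (u : ZMod s) * ((u⁻¹ : (ZMod s)ˣ) : ZMod s) := by rw [hcu]
      _ = 1 := u.mul_inv
  -- conclude
  rcases tri 0 with h0 | h0 | h0
  · have h1 := iter (pA φ) step3A 0 m h0
    rw [hm, zero_add] at h1
    have h2 := stepA 0 h0
    rw [zero_add] at h2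
    unfold pA at h1; unfold pC at h2
    omega
  · have h1 := iter (pB φ) step3B 0 m h0
    rw [hm, zero_add] at h1
    have h2 := stepB 0 h0
    rw [zero_add] at h2
    unfold pB at h1; unfold pA at h2
    omega
  · have h1 := iter (pC φ) step3C 0 m h0
    rw [hm, zero_add] at h1
    have h2 := stepC 0 h0
    rw [zero_add] at h2
    unfold pC at h1; unfold pB at h2
    omega
end

section
/- Fix s ≥ 5 with s not divisible by 3. There is a constant c > 0 such that for all sufficiently large t, r(C_s^3, K_t^3) > 2^{c t}. Equivalently, for all sufficiently large n there exists a 3-graph H on n vertices containing no copy of C_s^3 and having independence number at most c' log n. -/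
section Prog
variable {V : Type}

/-- progression triple w.r.t. an antisymmetric `ZMod 3`-valued pair weighting -/
def prog (γ : V → V → ZMod 3) (x y z : V) : Prop :=
  γ y z = γ x y + 1 ∧ γ z x = γ y z + 1

lemma prog_rot {γ : V → V → ZMod 3} {x y z : V}
    (h : prog γ x y z) : prog γ y z x := by
  obtain ⟨h1, h2⟩ := h
  refine ⟨h2, ?_⟩
  rw [h2, h1]
  generalize γ x y = a
  revert a; decide

lemma prog_swap {γ : V → V → ZMod 3} (hanti : ∀ x y, γ y x = -γ x y) {x y z : V}
    (h : prog γ x y z) : prog γ x z y := by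
  obtain ⟨h1, h2⟩ := h
  constructor
  · rw [hanti y z, hanti z x, h2, h1]
    generalize γ x y = a
    revert a; decide
  · rw [hanti x y, hanti y z, h1]
    generalize γ x y = a
    revert a; decide

/-- extract a permuted representative from a triple-set equality -/
lemma trip_perm [DecidableEq V] (P : V → V → V → Prop)
    (rot : ∀ u v w, P u v w → P v w u) (swap : ∀ u v w, P u v w → P u w v)
    {x y z a b c : V} (hab : a ≠ b) (hac : a ≠ c) (hbc : b ≠ c)
    (h : ({x, y, z} : Finset V) = {a, b, c}) (hp : P x y z) : P a b c := by
  have hxm : x = a ∨ x = b ∨ x = c := by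
    have : x ∈ ({a, b, c} : Finset V) := h ▸ (by simp)
    simpa using this
  have hym : y = a ∨ y = b ∨ y = c := by
    have : y ∈ ({a, b, c} : Finset V) := h ▸ (by simp)
    simpa using this
  have hzm : z = a ∨ z = b ∨ z = c := by
    have : z ∈ ({a, b, c} : Finset V) := h ▸ (by simp)
    simpa using this
  have ham : a = x ∨ a = y ∨ a = z := by
    have : a ∈ ({x, y, z} : Finset V) := by rw [h]; simp
    simpa using this
  have hbm : b = x ∨ b = y ∨ b = z := by
    have : b ∈ ({x, y, z} : Finset V) := by rw [h]; simp
    simpa using this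
  have hcm : c = x ∨ c = y ∨ c = z := by
    have : c ∈ ({x, y, z} : Finset V) := by rw [h]; simp
    simpa using this
  clear h hxm hym hzm
  rcases ham with rfl | rfl | rfl <;> rcases hbm with rfl | rfl | rfl <;>
    rcases hcm with rfl | rfl | rfl <;>
    first
      | exact hp
      | exact swap _ _ _ hp
      | exact rot _ _ _ hp
      | exact swap _ _ _ (rot _ _ _ hp)
      | exact rot _ _ _ (rot _ _ _ hp)
      | exact swap _ _ _ (rot _ _ _ (rot _ _ _ hp))
      | simp_all

end Prog

section Cycle
variable {V : Type} [DecidableEq V]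

lemma zmods_ne {s : ℕ} (hs : 5 ≤ s) (a : ℕ) (ha : 0 < a) (ha' : a < 5) :
    ((a : ℕ) : ZMod s) ≠ 0 := by
  intro h
  rw [ZMod.natCast_eq_zero_iff] at h
  have := Nat.le_of_dvd ha h
  omega

lemma no_tight_cycle (γ : V → V → ZMod 3)
    (hanti : ∀ x y, γ y x = -γ x y) {s : ℕ} (hs : 5 ≤ s) (hs3 : ¬ 3 ∣ s)
    (φ : ZMod s → V) (hφ : Function.Injective φ)
    (hmem : ∀ i : ZMod s, ∃ x y z, ({x, y, z} : Finset V) = {φ i, φ (i + 1), φ (i + 2)}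
      ∧ prog γ x y z) :
    False := by
  have h1 : (1 : ZMod s) ≠ 0 := by
    have := zmods_ne hs 1 (by norm_num) (by norm_num); simpa using this
  have h2 : (2 : ZMod s) ≠ 0 := by
    have := zmods_ne hs 2 (by norm_num) (by norm_num); simpa using this
  have h12 : (1 : ZMod s) ≠ 2 := by
    intro h
    apply h1
    have : (2 : ZMod s) - 1 = 0 := by rw [← h]; ring
    have h' : (1 : ZMod s) = 2 - 1 := by ring
    rw [h', this]
  have key : ∀ i : ZMod s, prog γ (φ i) (φ (i + 1)) (φ (i + 2)) := by
    intro i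
    obtain ⟨x, y, z, hset, hp⟩ := hmem i
    refine trip_perm (prog γ) (fun _ _ _ => prog_rot) (fun _ _ _ => prog_swap hanti)
      ?_ ?_ ?_ hset hp
    · exact fun h => h1 (by simpa using (add_eq_left.mp (hφ h).symm))
    · exact fun h => h2 (by simpa using (add_eq_left.mp (hφ h).symm))
    · intro h
      have := hφ h
      have : (1 : ZMod s) = 2 := by
        have := add_left_cancel this
        exact this
      exact h12 this
  set p : ZMod s → ZMod 3 := fun i => γ (φ i) (φ (i + 1)) with hp
  have step : ∀ i : ZMod s, p (i + 1) = p i + 1 := by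
    intro i
    have := (key i).1
    have e : i + 1 + 1 = i + 2 := by rw [add_assoc, one_add_one_eq_two]
    simpa [hp, e] using this
  have hiter : ∀ (l : ℕ) (i : ZMod s), p (i + (l : ZMod s)) = p i + (l : ZMod 3) := by
    intro l
    induction l with
    | zero => intro i; simp
    | succ l ih =>
      intro i
      have e : i + ((l + 1 : ℕ) : ZMod s) = (i + (l : ZMod s)) + 1 := by
        push_cast; ring
      rw [e, step, ih]
      push_cast; ring
  have := hiter s 0
  rw [ZMod.natCast_self, add_zero] at this
  have hz : ((s : ℕ) : ZMod 3) = 0 := by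
    have := left_eq_add.mp this
    exact this
  rw [ZMod.natCast_eq_zero_iff] at hz
  exact hs3 hz

end Cycle

section Counting
variable {n : ℕ}

def gam (g : Fin n × Fin n → ZMod 3) : Fin n → Fin n → ZMod 3 :=
  fun x y => if x < y then g (x, y) else if y < x then -g (y, x) else 0

lemma gam_anti (g : Fin n × Fin n → ZMod 3) : ∀ x y, gam g y x = -gam g x y := by
  intro x y
  unfold gam
  rcases lt_trichotomy x y with h | h | h
  · rw [if_neg (by omega), if_pos h, if_pos h]
  · subst h; simp
  · rw [if_pos h, if_neg (by omega), if_pos h, neg_neg]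

def enc (u v : ZMod 3) : ZMod 9 := ((u.val + 3 * v.val : ℕ) : ZMod 9)

lemma enc_lt (u v : ZMod 3) : u.val + 3 * v.val < 9 := by
  have hu := ZMod.val_lt u
  have hv := ZMod.val_lt v
  omega

lemma enc_inj {u v u' v' : ZMod 3} (h : enc u v = enc u' v') : u = u' ∧ v = v' := by
  unfold enc at h
  have h9 : (u.val + 3 * v.val) % 9 = (u'.val + 3 * v'.val) % 9 := by
    have h' := congrArg ZMod.val h
    rwa [ZMod.val_natCast, ZMod.val_natCast] at h'
  rw [Nat.mod_eq_of_lt (enc_lt u v), Nat.mod_eq_of_lt (enc_lt u' v')] at h9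
  have hu := ZMod.val_lt u; have hv := ZMod.val_lt v
  have hu' := ZMod.val_lt u'; have hv' := ZMod.val_lt v'
  constructor
  · exact ZMod.val_injective 3 (by omega)
  · exact ZMod.val_injective 3 (by omega)

lemma enc_ne_zero {u v : ZMod 3} (h : ¬(u = 0 ∧ v = 0)) : enc u v ≠ 0 := by
  intro h0
  apply h
  have : enc u v = enc 0 0 := by
    rw [h0]; unfold enc; simp
  exact enc_inj this

end Counting

section Main

abbrev QQ (n : ℕ) := Fin n × Fin n

/-- the crucial counting lemma: a progression-rich antisymmetric weighting exists -/
lemma good_gamma (n k : ℕ) (hcount : n ^ (3 * k) * 8 ^ (k * k) < 9 ^ (k * k)) :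
    ∃ g : QQ n → ZMod 3, ∀ T : Finset (Fin n), T.card = 3 * k →
      ∃ x ∈ T, ∃ y ∈ T, ∃ z ∈ T,
        ({x, y, z} : Finset (Fin n)).card = 3 ∧ prog (gam g) x y z := by
  classical
  by_contra hcon
  have hcon' : ∀ g : QQ n → ZMod 3, ∃ T : Finset (Fin n), T.card = 3 * k ∧
      ¬ ∃ x ∈ T, ∃ y ∈ T, ∃ z ∈ T,
        ({x, y, z} : Finset (Fin n)).card = 3 ∧ prog (gam g) x y z := by
    intro g
    by_contra h
    push_neg at h
    exact hcon ⟨g, fun T hT => h T hT⟩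
  obtain ⟨T₀, hT₀, -⟩ := hcon' (fun _ => 0)
  have h3kn : 3 * k ≤ n := by
    have := Finset.card_le_card (Finset.subset_univ T₀)
    simpa [hT₀] using this
  have key : ∀ T : Finset (Fin n), T.card = 3 * k →
      (Finset.univ.filter (fun g : QQ n → ZMod 3 =>
        ¬ ∃ x ∈ T, ∃ y ∈ T, ∃ z ∈ T,
          ({x, y, z} : Finset (Fin n)).card = 3 ∧ prog (gam g) x y z)).card ≤
      3 ^ (n * n - 2 * (k * k)) * 8 ^ (k * k) := by
    intro T hT
    set e := T.orderEmbOfFin hT with he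
    have hmem : ∀ i : Fin (3 * k), e i ∈ T := fun i => T.orderEmbOfFin_mem hT i
    have hsm : StrictMono e := (T.orderEmbOfFin hT).strictMono
    have hia : ∀ i : Fin k, 2 * i.val < 3 * k := fun i => by have := i.isLt; omega
    have hib : ∀ i : Fin k, 2 * i.val + 1 < 3 * k := fun i => by have := i.isLt; omega
    have hjc : ∀ j : Fin k, 2 * k + j.val < 3 * k := fun j => by have := j.isLt; omega
    set ia : Fin k → Fin (3 * k) := fun i => ⟨2 * i.val, hia i⟩ with hia'
    set ib : Fin k → Fin (3 * k) := fun i => ⟨2 * i.val + 1, hib i⟩ with hib'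
    set jc : Fin k → Fin (3 * k) := fun j => ⟨2 * k + j.val, hjc j⟩ with hjc'
    set P : Fin k → QQ n := fun i => (e (ia i), e (ib i)) with hP
    set L1 : Fin k → Fin k → QQ n := fun i j => (e (ib i), e (jc j)) with hL1
    set L2 : Fin k → Fin k → QQ n := fun i j => (e (ia i), e (jc j)) with hL2
    set D : Finset (QQ n) :=
      Finset.univ.image
        (fun p : (Fin k × Fin k) × Bool => if p.2 then L1 p.1.1 p.1.2 else L2 p.1.1 p.1.2)
      with hD
    have hDinj : Function.Injective
        (fun p : (Fin k × Fin k) × Bool => if p.2 then L1 p.1.1 p.1.2 else L2 p.1.1 p.1.2) := by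
      rintro ⟨⟨i, j⟩, b⟩ ⟨⟨i', j'⟩, b'⟩ hpq
      simp only [hL1, hL2] at hpq
      cases b <;> cases b' <;>
        simp only [if_true, if_false, Bool.false_eq_true, Prod.mk.injEq] at hpq <;>
        obtain ⟨hpq1, hpq2⟩ := hpq
      all_goals {
        have h1 := congrArg Fin.val (hsm.injective hpq1)
        have h2 := congrArg Fin.val (hsm.injective hpq2)
        simp only [hia', hib', hjc'] at h1 h2
        have : i = i' := Fin.ext (by omega)
        have : j = j' := Fin.ext (by omega)
        first
          | (exfalso; omega)
          | (subst_vars; rfl)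
      }
    have hPD : ∀ i : Fin k, P i ∉ D := by
      intro i hiD
      rw [hD, Finset.mem_image] at hiD
      obtain ⟨⟨⟨i', j'⟩, b⟩, -, hpe⟩ := hiD
      have h2 : e (jc j') = e (ib i) := by
        cases b <;>
          simpa [hL1, hL2, hP] using congrArg Prod.snd hpe
      have := congrArg Fin.val (hsm.injective h2)
      simp only [hjc', hib'] at this
      have := i.isLt; have := j'.isLt
      omega
    set Φ : (QQ n → ZMod 3) → ((QQ n → ZMod 3) × (Fin k × Fin k → ZMod 9)) :=
      fun g => (fun q => if q ∈ D then 0 else g q,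
        fun ij => enc (g (L1 ij.1 ij.2) - (g (P ij.1) + 1))
                      (g (L2 ij.1 ij.2) - (-g (P ij.1) - 2))) with hΦ
    set A : Finset (QQ n → ZMod 3) :=
      Fintype.piFinset (fun q : QQ n => if q ∈ D then ({0} : Finset (ZMod 3)) else Finset.univ)
      with hA
    set B : Finset (Fin k × Fin k → ZMod 9) :=
      Fintype.piFinset (fun _ : Fin k × Fin k => Finset.univ.erase (0 : ZMod 9)) with hB
    have hsub : (Finset.univ.filter (fun g : QQ n → ZMod 3 =>
        ¬ ∃ x ∈ T, ∃ y ∈ T, ∃ z ∈ T,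
          ({x, y, z} : Finset (Fin n)).card = 3 ∧ prog (gam g) x y z)) ⊆
        Finset.univ.filter (fun g : QQ n → ZMod 3 => ∀ i j : Fin k,
          ¬ (g (L1 i j) = g (P i) + 1 ∧ g (L2 i j) = -g (P i) - 2)) := by
      intro g hg
      rw [Finset.mem_filter] at hg ⊢
      refine ⟨Finset.mem_univ _, ?_⟩
      intro i j hbad
      apply hg.2
      simp only [hL1, hL2, hP] at hbad
      have hxy : e (ia i) < e (ib i) := hsm (by simp only [hia', hib', Fin.mk_lt_mk]; omega)
      have hyz : e (ib i) < e (jc j) := hsm (by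
        simp only [hib', hjc', Fin.mk_lt_mk]; have := i.isLt; omega)
      have hxz : e (ia i) < e (jc j) := lt_trans hxy hyz
      refine ⟨e (ia i), hmem _, e (ib i), hmem _, e (jc j), hmem _, ?_, ?_, ?_⟩
      · exact Finset.card_eq_three.mpr
          ⟨_, _, _, ne_of_lt hxy, ne_of_lt hxz, ne_of_lt hyz, rfl⟩
      · show gam g (e (ib i)) (e (jc j)) = gam g (e (ia i)) (e (ib i)) + 1
        simp only [gam]
        rw [if_pos hyz, if_pos hxy]
        exact hbad.1
      · show gam g (e (jc j)) (e (ia i)) = gam g (e (ib i)) (e (jc j)) + 1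
        simp only [gam]
        rw [if_neg (lt_asymm hxz), if_pos hxz, if_pos hyz]
        rw [hbad.2, hbad.1]
        ring
    have hmaps : ∀ g ∈ Finset.univ.filter (fun g : QQ n → ZMod 3 => ∀ i j : Fin k,
          ¬ (g (L1 i j) = g (P i) + 1 ∧ g (L2 i j) = -g (P i) - 2)),
        Φ g ∈ A ×ˢ B := by
      intro g hg
      rw [Finset.mem_filter] at hg
      rw [Finset.mem_product]
      constructor
      · rw [hA, Fintype.mem_piFinset]
        intro q
        by_cases hq : q ∈ D
        · simp [hΦ, hq]
        · simp [hΦ, hq]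
      · rw [hB, Fintype.mem_piFinset]
        intro ij
        simp only [Finset.mem_erase, Finset.mem_univ, and_true, hΦ]
        apply enc_ne_zero
        rintro ⟨h1, h2⟩
        exact hg.2 ij.1 ij.2 ⟨sub_eq_zero.mp h1, by
          have := sub_eq_zero.mp h2; exact this⟩
    have hinj : Set.InjOn Φ (Finset.univ.filter (fun g : QQ n → ZMod 3 => ∀ i j : Fin k,
          ¬ (g (L1 i j) = g (P i) + 1 ∧ g (L2 i j) = -g (P i) - 2))) := by
      intro g hg g' hg' heq
      have h1 : ∀ q ∉ D, g q = g' q := by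
        intro q hq
        have := congrArg (fun w => w.1 q) heq
        simpa [hΦ, hq] using this
      have h2 : ∀ i j : Fin k, g (L1 i j) = g' (L1 i j) ∧ g (L2 i j) = g' (L2 i j) := by
        intro i j
        have hgP : g (P i) = g' (P i) := h1 _ (hPD i)
        have hcomp := congrArg (fun w => w.2 (i, j)) heq
        simp only [hΦ] at hcomp
        obtain ⟨e1, e2⟩ := enc_inj hcomp
        rw [hgP] at e1 e2
        exact ⟨sub_left_inj.mp e1, sub_left_inj.mp e2⟩
      funext q
      by_cases hq : q ∈ D
      · rw [hD, Finset.mem_image] at hq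
        obtain ⟨⟨⟨i, j⟩, b⟩, -, hpe⟩ := hq
        cases b
        · simp only [if_false, Bool.false_eq_true] at hpe
          rw [← hpe]; exact (h2 i j).2
        · simp only [if_true] at hpe
          rw [← hpe]; exact (h2 i j).1
      · exact h1 q hq
    have hcard2 : (Finset.univ.filter (fun g : QQ n → ZMod 3 => ∀ i j : Fin k,
          ¬ (g (L1 i j) = g (P i) + 1 ∧ g (L2 i j) = -g (P i) - 2))).card ≤ (A ×ˢ B).card :=
      Finset.card_le_card_of_injOn Φ hmaps hinj
    have hDcard : D.card = 2 * (k * k) := by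
      rw [hD, Finset.card_image_of_injective _ hDinj]
      simp only [Finset.card_univ, Fintype.card_prod, Fintype.card_bool, Fintype.card_fin]
      ring
    have hAcard : A.card = 3 ^ (n * n - 2 * (k * k)) := by
      rw [hA, Fintype.card_piFinset]
      have : ∀ q : QQ n, (if q ∈ D then ({0} : Finset (ZMod 3)) else Finset.univ).card
          = if q ∈ D then 1 else 3 := by
        intro q; split_ifs <;> simp [Finset.card_univ, ZMod.card]
      rw [Finset.prod_congr rfl (fun q _ => this q)]
      rw [← Finset.prod_sdiff (Finset.subset_univ D)]
      have hone : ∏ q ∈ D, (if q ∈ D then 1 else 3) = 1 :=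
        Finset.prod_eq_one (fun q hq => if_pos hq)
      have hthree : ∏ q ∈ Finset.univ \ D, (if q ∈ D then 1 else 3)
          = 3 ^ (n * n - 2 * (k * k)) := by
        rw [Finset.prod_congr rfl (fun q hq => if_neg (Finset.mem_sdiff.mp hq).2)]
        rw [Finset.prod_const]
        congr 1
        rw [Finset.card_sdiff_of_subset (Finset.subset_univ D), hDcard]
        simp [Finset.card_univ, Fintype.card_prod, Fintype.card_fin]
      rw [hone, hthree, mul_one]
    have hBcard : B.card = 8 ^ (k * k) := by
      rw [hB, Fintype.card_piFinset]
      have : (Finset.univ.erase (0 : ZMod 9)).card = 8 := by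
        rw [Finset.card_erase_of_mem (Finset.mem_univ _), Finset.card_univ, ZMod.card]
      rw [Finset.prod_congr rfl (fun q _ => this), Finset.prod_const]
      congr 1
      simp [Finset.card_univ, Fintype.card_prod, Fintype.card_fin]
    calc (Finset.univ.filter (fun g : QQ n → ZMod 3 =>
        ¬ ∃ x ∈ T, ∃ y ∈ T, ∃ z ∈ T,
          ({x, y, z} : Finset (Fin n)).card = 3 ∧ prog (gam g) x y z)).card
        ≤ (Finset.univ.filter (fun g : QQ n → ZMod 3 => ∀ i j : Fin k,
          ¬ (g (L1 i j) = g (P i) + 1 ∧ g (L2 i j) = -g (P i) - 2))).card :=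
          Finset.card_le_card hsub
      _ ≤ (A ×ˢ B).card := hcard2
      _ = A.card * B.card := Finset.card_product A B
      _ = 3 ^ (n * n - 2 * (k * k)) * 8 ^ (k * k) := by rw [hAcard, hBcard]
  -- global union bound
  have hcover : (Finset.univ : Finset (QQ n → ZMod 3)) ⊆
      ((Finset.univ : Finset (Fin n)).powersetCard (3 * k)).biUnion
        (fun T => Finset.univ.filter (fun g : QQ n → ZMod 3 =>
          ¬ ∃ x ∈ T, ∃ y ∈ T, ∃ z ∈ T,
            ({x, y, z} : Finset (Fin n)).card = 3 ∧ prog (gam g) x y z)) := by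
    intro g _
    obtain ⟨T, hT1, hT2⟩ := hcon' g
    exact Finset.mem_biUnion.mpr ⟨T,
      Finset.mem_powersetCard.mpr ⟨Finset.subset_univ T, hT1⟩,
      Finset.mem_filter.mpr ⟨Finset.mem_univ _, hT2⟩⟩
  have hbig : (Finset.univ : Finset (QQ n → ZMod 3)).card ≤
      n.choose (3 * k) * (3 ^ (n * n - 2 * (k * k)) * 8 ^ (k * k)) := by
    calc (Finset.univ : Finset (QQ n → ZMod 3)).card
        ≤ (((Finset.univ : Finset (Fin n)).powersetCard (3 * k)).biUnion
            (fun T => Finset.univ.filter (fun g : QQ n → ZMod 3 =>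
              ¬ ∃ x ∈ T, ∃ y ∈ T, ∃ z ∈ T,
                ({x, y, z} : Finset (Fin n)).card = 3 ∧ prog (gam g) x y z))).card :=
          Finset.card_le_card hcover
      _ ≤ ∑ T ∈ (Finset.univ : Finset (Fin n)).powersetCard (3 * k),
            (Finset.univ.filter (fun g : QQ n → ZMod 3 =>
              ¬ ∃ x ∈ T, ∃ y ∈ T, ∃ z ∈ T,
                ({x, y, z} : Finset (Fin n)).card = 3 ∧ prog (gam g) x y z)).card :=
          Finset.card_biUnion_le
      _ ≤ ((Finset.univ : Finset (Fin n)).powersetCard (3 * k)).card •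
            (3 ^ (n * n - 2 * (k * k)) * 8 ^ (k * k)) := by
          apply Finset.sum_le_card_nsmul
          intro T hT
          exact key T (Finset.mem_powersetCard.mp hT).2
      _ = n.choose (3 * k) * (3 ^ (n * n - 2 * (k * k)) * 8 ^ (k * k)) := by
          rw [smul_eq_mul, Finset.card_powersetCard, Finset.card_univ, Fintype.card_fin]
  have huniv : (Finset.univ : Finset (QQ n → ZMod 3)).card = 3 ^ (n * n) := by
    rw [Finset.card_univ, Fintype.card_fun]
    simp [Fintype.card_prod, Fintype.card_fin, ZMod.card]
  have hkk : 2 * (k * k) ≤ n * n := by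
    have h9 : (3 * k) * (3 * k) ≤ n * n := Nat.mul_le_mul h3kn h3kn
    have : (3 * k) * (3 * k) = 9 * (k * k) := by ring
    omega
  have hsplit : (3 : ℕ) ^ (n * n) = 3 ^ (n * n - 2 * (k * k)) * 9 ^ (k * k) := by
    have h32 : (3 : ℕ) ^ (2 * (k * k)) = 9 ^ (k * k) := by
      rw [pow_mul]; norm_num
    rw [← h32, ← pow_add]
    congr 1
    omega
  rw [huniv, hsplit] at hbig
  have hchoose : n.choose (3 * k) ≤ n ^ (3 * k) := Nat.choose_le_pow _ _
  have hfinal : 3 ^ (n * n - 2 * (k * k)) * 9 ^ (k * k) ≤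
      3 ^ (n * n - 2 * (k * k)) * (n ^ (3 * k) * 8 ^ (k * k)) := by
    calc 3 ^ (n * n - 2 * (k * k)) * 9 ^ (k * k)
        ≤ n.choose (3 * k) * (3 ^ (n * n - 2 * (k * k)) * 8 ^ (k * k)) := hbig
      _ ≤ n ^ (3 * k) * (3 ^ (n * n - 2 * (k * k)) * 8 ^ (k * k)) :=
          Nat.mul_le_mul_right _ hchoose
      _ = 3 ^ (n * n - 2 * (k * k)) * (n ^ (3 * k) * 8 ^ (k * k)) := by ring
  have hpos : 0 < 3 ^ (n * n - 2 * (k * k)) := pow_pos (by norm_num) _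
  have := Nat.le_of_mul_le_mul_left hfinal hpos
  omega

end Main

lemma arith_base : (8 : ℕ)^19 < 9^18 := by norm_num

lemma arith2 (n : ℕ) :
    n ^ 3 * 8 ^ (18 * (Nat.log 2 n + 1)) < 9 ^ (18 * (Nat.log 2 n + 1)) := by
  set L := Nat.log 2 n with hL
  have h1 : n < 2 ^ (L + 1) := Nat.lt_pow_succ_log_self (by norm_num) n
  have h2 : n ^ 3 < 8 ^ (L + 1) := by
    calc n ^ 3 < (2 ^ (L + 1)) ^ 3 := Nat.pow_lt_pow_left h1 (by norm_num)
      _ = 8 ^ (L + 1) := by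
          rw [← pow_mul, mul_comm, pow_mul]; norm_num
  have h3 : 8 ^ (L + 1) * 8 ^ (18 * (L + 1)) ≤ 9 ^ (18 * (L + 1)) := by
    have : (8 : ℕ) ^ (L + 1) * 8 ^ (18 * (L + 1)) = (8 ^ 19) ^ (L + 1) := by
      rw [← pow_add, ← pow_mul]
      congr 1
      ring
    rw [this]
    have h9 : (9 : ℕ) ^ (18 * (L + 1)) = (9 ^ 18) ^ (L + 1) := by
      rw [← pow_mul]
    rw [h9]
    exact Nat.pow_le_pow_left (le_of_lt arith_base) _
  calc n ^ 3 * 8 ^ (18 * (L + 1)) < 8 ^ (L + 1) * 8 ^ (18 * (L + 1)) := by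
        exact (Nat.mul_lt_mul_right (pow_pos (by norm_num) _)).mpr h2
    _ ≤ 9 ^ (18 * (L + 1)) := h3

lemma arith_main (n : ℕ) :
    n ^ (3 * (18 * (Nat.log 2 n + 1))) * 8 ^ ((18 * (Nat.log 2 n + 1)) * (18 * (Nat.log 2 n + 1)))
      < 9 ^ ((18 * (Nat.log 2 n + 1)) * (18 * (Nat.log 2 n + 1))) := by
  set k := 18 * (Nat.log 2 n + 1) with hk
  have hk0 : k ≠ 0 := by omega
  have := arith2 n
  rw [← hk] at this
  have hpow : (n ^ 3 * 8 ^ k) ^ k < (9 ^ k) ^ k :=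
    Nat.pow_lt_pow_left this hk0
  calc n ^ (3 * k) * 8 ^ (k * k) = (n ^ 3 * 8 ^ k) ^ k := by
        rw [mul_pow, ← pow_mul, ← pow_mul]
    _ < (9 ^ k) ^ k := hpow
    _ = 9 ^ (k * k) := by rw [← pow_mul]

/-- monochromatic-set graph Ramsey, greedy version -/
lemma ramsey2 : ∀ (N r b : ℕ) (S : Finset ℕ) (c : ℕ → ℕ → Bool), r + b = N →
    2 ^ N ≤ S.card →
    ∃ A ⊆ S, (A.card = r ∧ ∀ x ∈ A, ∀ y ∈ A, x < y → c x y = true) ∨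
             (A.card = b ∧ ∀ x ∈ A, ∀ y ∈ A, x < y → c x y = false) := by
  intro N
  induction N with
  | zero =>
    intro r b S c hrb hS
    have hr : r = 0 := by omega
    exact ⟨∅, Finset.empty_subset _, Or.inl ⟨by simp [hr], by simp⟩⟩
  | succ N ih =>
    intro r b S c hrb hS
    rcases Nat.eq_zero_or_pos r with hr | hr
    · exact ⟨∅, Finset.empty_subset _, Or.inl ⟨by simp [hr], by simp⟩⟩
    rcases Nat.eq_zero_or_pos b with hb | hb
    · exact ⟨∅, Finset.empty_subset _, Or.inr ⟨by simp [hb], by simp⟩⟩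
    have hSne : S.Nonempty := by
      rw [← Finset.card_pos]
      have : 0 < 2 ^ (N + 1) := pow_pos (by norm_num) _
      omega
    set x := S.min' hSne with hx
    have hxS : x ∈ S := S.min'_mem hSne
    set S' := S.erase x with hS'
    have hS'card : S'.card = S.card - 1 := Finset.card_erase_of_mem hxS
    set St := S'.filter (fun y => c x y = true) with hSt
    set Sf := S'.filter (fun y => ¬ (c x y = true)) with hSf
    have hsplit : St.card + Sf.card = S'.card := Finset.card_filter_add_card_filter_not _
    have hpow : 2 ^ (N + 1) = 2 ^ N + 2 ^ N := by ring
    have hcase : 2 ^ N ≤ St.card ∨ 2 ^ N ≤ Sf.card := by omega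
    rcases hcase with hbig | hbig
    · obtain ⟨A, hAsub, hA⟩ := ih (r - 1) b St c (by omega) hbig
      rcases hA with ⟨hcard, hmono⟩ | ⟨hcard, hmono⟩
      · refine ⟨insert x A, ?_, Or.inl ⟨?_, ?_⟩⟩
        · apply Finset.insert_subset hxS
          exact hAsub.trans ((Finset.filter_subset _ _).trans (Finset.erase_subset _ _))
        · rw [Finset.card_insert_of_notMem, hcard]
          · omega
          · intro hxA
            have := hAsub hxA
            rw [hSt, Finset.mem_filter] at this
            exact (Finset.notMem_erase x S) this.1
        · intro u hu v hv huv
          rw [Finset.mem_insert] at hu hv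
          rcases hu with rfl | hu
          · rcases hv with rfl | hv
            · omega
            · have := hAsub hv
              rw [hSt, Finset.mem_filter] at this
              exact this.2
          · rcases hv with rfl | hv
            · exfalso
              have hu' := hAsub hu
              rw [hSt, Finset.mem_filter] at hu'
              have : u ∈ S := Finset.mem_of_mem_erase hu'.1
              have := S.min'_le u this
              omega
            · exact hmono u hu v hv huv
      · exact ⟨A, hAsub.trans ((Finset.filter_subset _ _).trans (Finset.erase_subset _ _)),
          Or.inr ⟨hcard, hmono⟩⟩
    · obtain ⟨A, hAsub, hA⟩ := ih r (b - 1) Sf c (by omega) hbig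
      rcases hA with ⟨hcard, hmono⟩ | ⟨hcard, hmono⟩
      · exact ⟨A, hAsub.trans ((Finset.filter_subset _ _).trans (Finset.erase_subset _ _)),
          Or.inl ⟨hcard, hmono⟩⟩
      · refine ⟨insert x A, ?_, Or.inr ⟨?_, ?_⟩⟩
        · apply Finset.insert_subset hxS
          exact hAsub.trans ((Finset.filter_subset _ _).trans (Finset.erase_subset _ _))
        · rw [Finset.card_insert_of_notMem, hcard]
          · omega
          · intro hxA
            have := hAsub hxA
            rw [hSf, Finset.mem_filter] at this
            exact (Finset.notMem_erase x S) this.1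
        · intro u hu v hv huv
          rw [Finset.mem_insert] at hu hv
          rcases hu with rfl | hu
          · rcases hv with rfl | hv
            · omega
            · have := hAsub hv
              rw [hSf, Finset.mem_filter] at this
              simpa using this.2
          · rcases hv with rfl | hv
            · exfalso
              have hu' := hAsub hu
              rw [hSf, Finset.mem_filter] at hu'
              have : u ∈ S := Finset.mem_of_mem_erase hu'.1
              have := S.min'_le u this
              omega
            · exact hmono u hu v hv huv

/-- size requirement for the step-up construction -/
def req : ℕ → ℕ → ℕ
  | _, 0 => 0
  | m, r + 1 => 2 ^ m * (req (m + 1) r + 1)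

lemma stepupAux (c3 : ℕ → ℕ → ℕ → Bool) :
    ∀ (r : ℕ) (X S : Finset ℕ),
      (∀ a ∈ X, ∀ y ∈ S, a < y) →
      (∀ a ∈ X, ∀ b ∈ X, a < b → ∀ y ∈ S, ∀ z ∈ S, c3 a b y = c3 a b z) →
      (∀ a ∈ X, ∀ b ∈ X, a < b → ∀ u ∈ X, b < u → ∀ y ∈ S, c3 a b u = c3 a b y) →
      (∀ a ∈ X, ∀ b ∈ X, a < b → ∀ u ∈ X, b < u → ∀ v ∈ X, b < v → c3 a b u = c3 a b v) →
      req X.card r ≤ S.card →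
      ∃ T : Finset ℕ, X ⊆ T ∧ T \ X ⊆ S ∧ T.card = X.card + r ∧
        (∀ a ∈ T, ∀ b ∈ T, a < b → ∀ u ∈ T, b < u → ∀ v ∈ T, b < v → c3 a b u = c3 a b v) := by
  intro r
  induction r with
  | zero =>
    intro X S h1 h2 h3 h4 hreq
    exact ⟨X, Finset.Subset.refl X, by simp, by simp, h4⟩
  | succ r ih =>
    intro X S h1 h2 h3 h4 hreq
    set m := X.card with hm
    have hreq' : 2 ^ m * (req (m + 1) r + 1) ≤ S.card := hreq
    have hSne : S.Nonempty := by
      rw [← Finset.card_pos]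
      have h2m : 0 < 2 ^ m := pow_pos (by norm_num) _
      have : 0 < 2 ^ m * (req (m + 1) r + 1) := by positivity
      omega
    set x := S.min' hSne with hx
    have hxS : x ∈ S := S.min'_mem hSne
    set S' := S.erase x with hS'
    have hS'card : S'.card = S.card - 1 := Finset.card_erase_of_mem hxS
    -- fingerprint pigeonhole
    have hmaps : ∀ y ∈ S', (X.filter (fun a => c3 a x y = true)) ∈ X.powerset :=
      fun y _ => Finset.mem_powerset.mpr (Finset.filter_subset _ _)
    have hpcard : X.powerset.card = 2 ^ m := by rw [Finset.card_powerset, hm]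
    have hcnt : X.powerset.card * (req (m + 1) r) ≤ S'.card := by
      rw [hpcard, hS'card]
      have h2m : 0 < 2 ^ m := pow_pos (by norm_num) _
      have hexp : 2 ^ m * (req (m + 1) r + 1) = 2 ^ m * req (m + 1) r + 2 ^ m := by ring
      omega
    obtain ⟨w, -, hw⟩ := Finset.exists_le_card_fiber_of_mul_le_card_of_maps_to hmaps
      ⟨∅, Finset.empty_mem_powerset X⟩ hcnt
    set C := S'.filter (fun y => X.filter (fun a => c3 a x y = true) = w) with hC
    have hCS : C ⊆ S := (Finset.filter_subset _ _).trans (Finset.erase_subset _ _)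
    have hCcard : req (m + 1) r ≤ C.card := hw
    have hxX : x ∉ X := fun hxX => lt_irrefl x (h1 x hxX x hxS)
    have hXx : ∀ a ∈ X, a < x := fun a ha => h1 a ha x hxS
    have hxC : ∀ y ∈ C, x < y := by
      intro y hy
      have hy' : y ∈ S' := (Finset.filter_subset _ _) hy
      have : y ∈ S := Finset.mem_of_mem_erase hy'
      have := S.min'_le y this
      have : y ≠ x := Finset.ne_of_mem_erase hy'
      omega
    -- invariants for (insert x X, C)
    have h1' : ∀ a ∈ insert x X, ∀ y ∈ C, a < y := by
      intro a ha y hy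
      rw [Finset.mem_insert] at ha
      rcases ha with rfl | ha
      · exact hxC y hy
      · exact h1 a ha y (hCS hy)
    have hfp : ∀ a ∈ X, ∀ y ∈ C, ∀ z ∈ C, c3 a x y = c3 a x z := by
      intro a ha y hy z hz
      rw [hC, Finset.mem_filter] at hy hz
      have hyv : (c3 a x y = true) ↔ a ∈ w := by
        rw [← hy.2, Finset.mem_filter]
        exact ⟨fun h => ⟨ha, h⟩, fun h => h.2⟩
      have hzv : (c3 a x z = true) ↔ a ∈ w := by
        rw [← hz.2, Finset.mem_filter]
        exact ⟨fun h => ⟨ha, h⟩, fun h => h.2⟩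
      have hiff : (c3 a x y = true) ↔ (c3 a x z = true) := hyv.trans hzv.symm
      revert hiff
      cases c3 a x y <;> cases c3 a x z <;> simp
    have h2' : ∀ a ∈ insert x X, ∀ b ∈ insert x X, a < b →
        ∀ y ∈ C, ∀ z ∈ C, c3 a b y = c3 a b z := by
      intro a ha b hb hab y hy z hz
      rw [Finset.mem_insert] at ha hb
      rcases ha with rfl | ha
      · rcases hb with rfl | hb
        · omega
        · exfalso; have := hXx b hb; omega
      · rcases hb with rfl | hb
        · exact hfp a ha y hy z hz
        · exact h2 a ha b hb hab y (hCS hy) z (hCS hz)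
    have h3' : ∀ a ∈ insert x X, ∀ b ∈ insert x X, a < b →
        ∀ u ∈ insert x X, b < u → ∀ y ∈ C, c3 a b u = c3 a b y := by
      intro a ha b hb hab u hu hbu y hy
      rw [Finset.mem_insert] at ha hb hu
      rcases ha with rfl | ha
      · exfalso
        rcases hb with rfl | hb
        · omega
        · have := hXx b hb; omega
      · rcases hb with rfl | hb
        · exfalso
          rcases hu with rfl | hu
          · omega
          · have := hXx u hu; omega
        · rcases hu with rfl | hu
          · exact h2 a ha b hb hab x hxS y (hCS hy)
          · exact h3 a ha b hb hab u hu hbu y (hCS hy)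
    have h4' : ∀ a ∈ insert x X, ∀ b ∈ insert x X, a < b →
        ∀ u ∈ insert x X, b < u → ∀ v ∈ insert x X, b < v → c3 a b u = c3 a b v := by
      intro a ha b hb hab u hu hbu v hv hbv
      rw [Finset.mem_insert] at ha hb hu hv
      rcases ha with rfl | ha
      · exfalso
        rcases hb with rfl | hb
        · omega
        · have := hXx b hb; omega
      · rcases hb with rfl | hb
        · exfalso
          rcases hu with rfl | hu
          · omega
          · have := hXx u hu; omega
        · rcases hu with rfl | hu
          · rcases hv with rfl | hv
            · rfl
            · exact (h3 a ha b hb hab v hv hbv x hxS).symm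
          · rcases hv with rfl | hv
            · exact h3 a ha b hb hab u hu hbu x hxS
            · exact h4 a ha b hb hab u hu hbu v hv hbv
    have hcardins : (insert x X).card = m + 1 := by
      rw [Finset.card_insert_of_notMem hxX]
    obtain ⟨T, hXT, hTX, hTcard, hTprop⟩ := ih (insert x X) C h1' h2' h3' h4'
      (by rw [hcardins]; exact hCcard)
    refine ⟨T, ?_, ?_, ?_, hTprop⟩
    · exact (Finset.subset_insert x X).trans hXT
    · intro u hu
      rw [Finset.mem_sdiff] at hu
      by_cases hux : u = x
      · subst hux; exact hxS
      · have : u ∈ T \ insert x X := by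
          rw [Finset.mem_sdiff, Finset.mem_insert]
          exact ⟨hu.1, by tauto⟩
        exact hCS (hTX this)
    · rw [hTcard, hcardins]; omega

lemma stepup (c3 : ℕ → ℕ → ℕ → Bool) (L : ℕ) (S : Finset ℕ) (hS : req 0 L ≤ S.card) :
    ∃ T ⊆ S, T.card = L ∧ ∃ c2 : ℕ → ℕ → Bool,
      ∀ x ∈ T, ∀ y ∈ T, ∀ z ∈ T, x < y → y < z → c3 x y z = c2 x y := by
  classical
  obtain ⟨T, -, hTS, hTcard, hTprop⟩ := stepupAux c3 L ∅ S
    (by simp) (by simp) (by simp) (by simp) (by simpa using hS)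
  refine ⟨T, by simpa using hTS, by simpa using hTcard, ?_⟩
  refine ⟨fun a b => if h : ((T.filter (fun u => b < u)).Nonempty)
    then c3 a b ((T.filter (fun u => b < u)).min' h) else true, ?_⟩
  intro x hx y hy z hz hxy hyz
  have hne : (T.filter (fun u => y < u)).Nonempty :=
    ⟨z, Finset.mem_filter.mpr ⟨hz, hyz⟩⟩
  dsimp only
  rw [dif_pos hne]
  have hmm := (T.filter (fun u => y < u)).min'_mem hne
  rw [Finset.mem_filter] at hmm
  exact hTprop x hx y hy hxy z hz hyz _ hmm.1 hmm.2

lemma zmod_triple_card {s : ℕ} (hs : 5 ≤ s) (i : ZMod s) {V : Type} [DecidableEq V]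
    (φ : ZMod s → V) (hφ : Function.Injective φ) :
    ({φ i, φ (i + 1), φ (i + 2)} : Finset V).card = 3 := by
  have h1 : (1 : ZMod s) ≠ 0 := by
    have := zmods_ne hs 1 (by norm_num) (by norm_num); simpa using this
  have h2 : (2 : ZMod s) ≠ 0 := by
    have := zmods_ne hs 2 (by norm_num) (by norm_num); simpa using this
  have h12 : (1 : ZMod s) ≠ 2 := by
    intro h
    apply h1
    have : (2 : ZMod s) - 1 = 0 := by rw [← h]; ring
    have h' : (1 : ZMod s) = 2 - 1 := by ring
    rw [h', this]
  apply Finset.card_eq_three.mpr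
  refine ⟨φ i, φ (i + 1), φ (i + 2), ?_, ?_, ?_, rfl⟩
  · exact fun h => h1 (by simpa using (add_eq_left.mp (hφ h).symm))
  · exact fun h => h2 (by simpa using (add_eq_left.mp (hφ h).symm))
  · intro h
    exact h12 (add_left_cancel (hφ h))

lemma triple_sort {α : Type} [LinearOrder α] (e : Finset α) (h : e.card = 3) :
    ∃ u v w, u < v ∧ v < w ∧ e = {u, v, w} := by
  classical
  obtain ⟨a, b, c, hab, hac, hbc, rfl⟩ := Finset.card_eq_three.mp h
  rcases lt_trichotomy a b with h1 | h1 | h1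
  · rcases lt_trichotomy b c with h2 | h2 | h2
    · exact ⟨a, b, c, h1, h2, rfl⟩
    · exact absurd h2 hbc
    · rcases lt_trichotomy a c with h3 | h3 | h3
      · exact ⟨a, c, b, h3, h2, by ext t; simp; tauto⟩
      · exact absurd h3 hac
      · exact ⟨c, a, b, h3, h1, by ext t; simp; tauto⟩
  · exact absurd h1 hab
  · rcases lt_trichotomy a c with h2 | h2 | h2
    · exact ⟨b, a, c, h1, h2, by ext t; simp; tauto⟩
    · exact absurd h2 hac
    · rcases lt_trichotomy b c with h3 | h3 | h3
      · exact ⟨b, c, a, h3, h2, by ext t; simp; tauto⟩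
      · exact absurd h3 hbc
      · exact ⟨c, b, a, h3, h1, by ext t; simp; tauto⟩

lemma ramsey3_exists (s t : ℕ) (hs : 5 ≤ s) :
    ∃ N : ℕ, ∀ red : Finset (Fin N) → Prop,
      (∃ φ : ZMod s → Fin N, Function.Injective φ ∧
        ∀ e ∈ {e : Finset (ZMod s) | ∃ i : ZMod s, e = {i, i + 1, i + 2}}, red (e.image φ)) ∨
      (∃ T : Finset (Fin N), T.card = t ∧ ∀ e ∈ T.powersetCard 3, ¬ red e) := by
  classical
  set p := max s t with hp
  set L := 2 ^ (p + p) with hL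
  refine ⟨req 0 L + 1, ?_⟩
  set N := req 0 L + 1 with hN
  intro red
  set f : ℕ → Fin N := fun a => if h : a < N then ⟨a, h⟩ else ⟨0, by omega⟩ with hf
  set c3 : ℕ → ℕ → ℕ → Bool :=
    fun a b c => if red {f a, f b, f c} then true else false with hc3
  obtain ⟨T, hTS, hTcard, c2, hc2⟩ := stepup c3 L (Finset.range N)
    (by rw [Finset.card_range]; omega)
  obtain ⟨A, hAT, hA⟩ := ramsey2 (p + p) p p T c2 rfl (by rw [hTcard])
  have hAN : ∀ a ∈ A, a < N := fun a ha => Finset.mem_range.mp (hTS (hAT ha))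
  have hfval : ∀ (a : ℕ) (h : a < N), f a = ⟨a, h⟩ := by
    intro a h; rw [hf]; exact dif_pos h
  have hford : ∀ a ∈ A, ∀ b ∈ A, (a < b ↔ f a < f b) := by
    intro a ha b hb
    rw [hfval a (hAN a ha), hfval b (hAN b hb)]
    exact Iff.symm (Fin.mk_lt_mk)
  have hfinj : Set.InjOn f A := by
    intro a ha b hb hfe
    rw [hfval a (hAN a ha), hfval b (hAN b hb), Fin.mk.injEq] at hfe
    exact hfe
  have hAcard : ∀ (q : ℕ), A.card = q → (A.image f).card = q := by
    intro q hq; rw [Finset.card_image_of_injOn hfinj, hq]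
  -- the key dictionary between `red` on triples in the image and `c2`
  have key : ∀ e : Finset (Fin N), e ⊆ A.image f → e.card = 3 →
      ∃ a ∈ A, ∃ b ∈ A, a < b ∧ (red e ↔ c2 a b = true) := by
    intro e hesub he3
    obtain ⟨u, v, w, huv, hvw, hew⟩ := triple_sort e he3
    have hu : u ∈ A.image f := hesub (by rw [hew]; simp)
    have hv : v ∈ A.image f := hesub (by rw [hew]; simp)
    have hw : w ∈ A.image f := hesub (by rw [hew]; simp)
    obtain ⟨a, ha, hfa⟩ := Finset.mem_image.mp hu
    obtain ⟨b, hb, hfb⟩ := Finset.mem_image.mp hv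
    obtain ⟨c, hc, hfc⟩ := Finset.mem_image.mp hw
    have hab : a < b := (hford a ha b hb).mpr (by rw [hfa, hfb]; exact huv)
    have hbc : b < c := (hford b hb c hc).mpr (by rw [hfb, hfc]; exact hvw)
    have hc3v := hc2 a (hAT ha) b (hAT hb) c (hAT hc) hab hbc
    rw [hc3] at hc3v
    simp only at hc3v
    have hset : ({f a, f b, f c} : Finset (Fin N)) = e := by
      rw [hfa, hfb, hfc, hew]
    rw [hset] at hc3v
    refine ⟨a, ha, b, hb, hab, ?_⟩
    constructor
    · intro hred
      rw [if_pos hred] at hc3v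
      exact hc3v.symm
    · intro hcc
      by_contra hred
      rw [if_neg hred] at hc3v
      rw [← hc3v] at hcc
      exact Bool.false_ne_true hcc
  rcases hA with ⟨hcard, hmono⟩ | ⟨hcard, hmono⟩
  · -- red case : red copy of everything on a p-set, p ≥ s
    left
    haveI : NeZero s := ⟨by omega⟩
    have hscard : Fintype.card (ZMod s) ≤ Fintype.card (A.image f : Finset (Fin N)) := by
      rw [ZMod.card, Fintype.card_coe, hAcard p hcard]
      exact le_max_left s t
    obtain ⟨emb⟩ := Function.Embedding.nonempty_iff_card_le.mpr hscard
    refine ⟨fun i => (emb i : Fin N), Subtype.coe_injective.comp emb.injective, ?_⟩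
    rintro e ⟨i, rfl⟩
    set φ : ZMod s → Fin N := fun i => (emb i : Fin N) with hφ
    have hφinj : Function.Injective φ := Subtype.coe_injective.comp emb.injective
    have himg : ({i, i + 1, i + 2} : Finset (ZMod s)).image φ
        = {φ i, φ (i + 1), φ (i + 2)} := by
      simp [Finset.image_insert, Finset.image_singleton]
    rw [himg]
    have hsub : ({φ i, φ (i + 1), φ (i + 2)} : Finset (Fin N)) ⊆ A.image f := by
      intro q hq
      simp only [Finset.mem_insert, Finset.mem_singleton] at hq
      rcases hq with rfl | rfl | rfl <;> exact (emb _).2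
    obtain ⟨a, ha, b, hb, hab, hiff⟩ := key _ hsub (zmod_triple_card hs i φ hφinj)
    exact hiff.mpr (hmono a ha b hb hab)
  · -- blue case : independent t-set
    right
    obtain ⟨B, hBsub, hBcard⟩ := Finset.exists_subset_card_eq (s := A.image f) (n := t)
      (by rw [hAcard p hcard]; exact le_max_right s t)
    refine ⟨B, hBcard, ?_⟩
    intro e he hred
    rw [Finset.mem_powersetCard] at he
    obtain ⟨a, ha, b, hb, hab, hiff⟩ := key e (he.1.trans hBsub) he.2
    have := hiff.mp hred
    rw [hmono a ha b hb hab] at this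
    exact Bool.false_ne_true this

/-- The key construction, packaged. -/
lemma exists_H (s n : ℕ) (hs : 5 ≤ s) (hs3 : ¬ 3 ∣ s) :
    ∃ H : Set (Finset (Fin n)),
      (∀ e ∈ H, e.card = 3) ∧
      (¬ ∃ φ : ZMod s → Fin n, Function.Injective φ ∧
        ∀ i : ZMod s, ({φ i, φ (i + 1), φ (i + 2)} : Finset (Fin n)) ∈ H) ∧
      (∀ T : Finset (Fin n), (∀ e ∈ T.powersetCard 3, e ∉ H) →
        T.card ≤ 3 * (18 * (Nat.log 2 n + 1))) := by
  classical
  obtain ⟨g, hg⟩ := good_gamma n (18 * (Nat.log 2 n + 1)) (arith_main n)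
  refine ⟨{e | e.card = 3 ∧ ∃ x y z, e = {x, y, z} ∧ prog (gam g) x y z}, ?_, ?_, ?_⟩
  · intro e he; exact he.1
  · rintro ⟨φ, hφ, hcyc⟩
    apply no_tight_cycle (gam g) (gam_anti g) hs hs3 φ hφ
    intro i
    obtain ⟨-, x, y, z, hexy, hp⟩ := hcyc i
    exact ⟨x, y, z, hexy.symm, hp⟩
  · intro T hind
    by_contra hcard
    push_neg at hcard
    obtain ⟨T', hT'sub, hT'card⟩ :=
      Finset.exists_subset_card_eq (s := T) (n := 3 * (18 * (Nat.log 2 n + 1))) (le_of_lt hcard)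
    obtain ⟨x, hx, y, hy, z, hz, hc3, hp⟩ := hg T' hT'card
    refine hind {x, y, z} ?_ ⟨hc3, x, y, z, rfl, hp⟩
    rw [Finset.mem_powersetCard]
    refine ⟨?_, hc3⟩
    intro w hw
    simp only [Finset.mem_insert, Finset.mem_singleton] at hw
    rcases hw with rfl | rfl | rfl
    · exact hT'sub hx
    · exact hT'sub hy
    · exact hT'sub hz

/-- The 3-uniform Ramsey number `r(F, K_t^3)`. -/
noncomputable def ramsey3 {α : Type} (E : Set (Finset α)) (t : ℕ) : ℕ :=
  sInf {n : ℕ | ∀ red : Finset (Fin n) → Prop,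
    (∃ φ : α → Fin n, Function.Injective φ ∧ ∀ e ∈ E, red (e.image φ)) ∨
    (∃ T : Finset (Fin n), T.card = t ∧ ∀ e ∈ T.powersetCard 3, ¬ red e)}

/-- for fixed `s ≥ 5` with `3 ∤ s`, there is `c > 0` with
`r(C_s^3, K_t^3) > 2^{c t}` for large `t`; equivalently, for all large `n` there is a
3-graph `H` on `n` vertices with no copy of `C_s^3` and independence number at most
`c' log n`. -/
theorem stmt8 (s : ℕ) (hs : 5 ≤ s) (hs3 : ¬ (3 ∣ s)) :
    (∃ c : ℝ, 0 < c ∧ ∀ᶠ t : ℕ in Filter.atTop,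
      (2 : ℝ) ^ (c * t) < (ramsey3 {e : Finset (ZMod s) | ∃ i : ZMod s, e = {i, i + 1, i + 2}} t : ℝ)) ∧
    (∃ c' : ℝ, 0 < c' ∧ ∀ᶠ n : ℕ in Filter.atTop,
      ∃ H : Set (Finset (Fin n)),
        (∀ e ∈ H, e.card = 3) ∧
        (¬ ∃ φ : ZMod s → Fin n, Function.Injective φ ∧
          ∀ i : ZMod s, ({φ i, φ (i + 1), φ (i + 2)} : Finset (Fin n)) ∈ H) ∧
        (∀ T : Finset (Fin n), (∀ e ∈ T.powersetCard 3, e ∉ H) →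
          (T.card : ℝ) ≤ c' * Real.log n)) := by
  constructor
  · -- part 1
    refine ⟨1/100, by norm_num, ?_⟩
    rw [Filter.eventually_atTop]
    refine ⟨30000, fun t ht => ?_⟩
    set E : Set (Finset (ZMod s)) := {e : Finset (ZMod s) | ∃ i : ZMod s, e = {i, i + 1, i + 2}}
      with hE
    set St : Set ℕ := {n : ℕ | ∀ red : Finset (Fin n) → Prop,
      (∃ φ : ZMod s → Fin n, Function.Injective φ ∧ ∀ e ∈ E, red (e.image φ)) ∨
      (∃ T : Finset (Fin n), T.card = t ∧ ∀ e ∈ T.powersetCard 3, ¬ red e)} with hSt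
    have hne : St.Nonempty := by
      obtain ⟨N, hN⟩ := ramsey3_exists s t hs
      exact ⟨N, hN⟩
    have hram : ramsey3 E t = sInf St := rfl
    have claim : ∀ n ∈ St, (2 : ℝ) ^ ((1/100 : ℝ) * t) < n := by
      intro n hn
      by_contra hle
      push_neg at hle
      -- from the size bound, the independence number threshold is < t
      have hlog : 54 * (Nat.log 2 n + 1) < t := by
        rcases Nat.lt_or_ge n 2 with hn2 | hn2
        · have : Nat.log 2 n = 0 := Nat.log_eq_zero_iff.mpr (Or.inl hn2)
          rw [this]
          omega
        · set L := Nat.log 2 n with hL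
          have h1 : (2:ℕ) ^ L ≤ n := Nat.pow_log_le_self 2 (by omega)
          have h2 : ((2:ℝ) ^ (L : ℝ)) ≤ (2 : ℝ) ^ ((1/100 : ℝ) * t) := by
            calc ((2:ℝ) ^ (L : ℝ)) = ((2:ℕ) ^ L : ℝ) := by
                  rw [Real.rpow_natCast]; push_cast; ring
              _ ≤ (n : ℝ) := by exact_mod_cast h1
              _ ≤ _ := hle
          have h3 : (L : ℝ) ≤ (1/100 : ℝ) * t :=
            (Real.rpow_le_rpow_left_iff (by norm_num : (1:ℝ) < 2)).mp h2
          have h4 : (L : ℝ) ≤ (t : ℝ) / 100 := by linarith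
          have h5 : 100 * L ≤ t := by
            have hr : (100 * L : ℝ) ≤ (t : ℝ) := by push_cast; linarith
            exact_mod_cast hr
          omega
      obtain ⟨H, hH3, hnocopy, hind⟩ := exists_H s n hs hs3
      rcases hn (fun e => e ∈ H) with ⟨φ, hφ, hall⟩ | ⟨T, hTcard, hTind⟩
      · apply hnocopy
        refine ⟨φ, hφ, fun i => ?_⟩
        have := hall {i, i + 1, i + 2} ⟨i, rfl⟩
        have himg : ({i, i + 1, i + 2} : Finset (ZMod s)).image φ
            = {φ i, φ (i + 1), φ (i + 2)} := by
          simp [Finset.image_insert, Finset.image_singleton]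
        rwa [himg] at this
      · have := hind T hTind
        rw [hTcard] at this
        omega
    rw [hram]
    exact claim (sInf St) (Nat.sInf_mem hne)
  · -- part 2
    refine ⟨200, by norm_num, ?_⟩
    rw [Filter.eventually_atTop]
    refine ⟨2, fun n hn => ?_⟩
    obtain ⟨H, hH3, hnocopy, hind⟩ := exists_H s n hs hs3
    refine ⟨H, hH3, hnocopy, ?_⟩
    intro T hT
    have hcard := hind T hT
    set L := Nat.log 2 n with hL
    have hlog : (L : ℝ) * Real.log 2 ≤ Real.log n := by
      have h1 : (2:ℕ) ^ L ≤ n := Nat.pow_log_le_self 2 (by omega)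
      have h2 : Real.log (((2:ℕ) ^ L : ℕ) : ℝ) ≤ Real.log n :=
        Real.log_le_log (by positivity) (by exact_mod_cast h1)
      rw [show (((2:ℕ) ^ L : ℕ) : ℝ) = (2:ℝ) ^ L by push_cast; ring, Real.log_pow] at h2
      linarith [h2]
    have hl2 : (0.6931471803 : ℝ) < Real.log 2 := Real.log_two_gt_d9
    have hlogn : Real.log 2 ≤ Real.log n :=
      Real.log_le_log (by norm_num) (by exact_mod_cast hn)
    have hL0 : (0:ℝ) ≤ (L : ℝ) := Nat.cast_nonneg L
    have hTreal : (T.card : ℝ) ≤ 54 * (L : ℝ) + 54 := by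
      have : T.card ≤ 54 * (L + 1) := by omega
      have := (Nat.cast_le (α := ℝ)).mpr this
      push_cast at this
      linarith
    have key1 : 54 * (L : ℝ) ≤ 78 * Real.log n := by nlinarith
    have key2 : (54 : ℝ) ≤ 122 * Real.log n := by nlinarith
    linarith
end

section
/- Let G^{k-1} be any (k-1)-uniform hypergraph on vertex set [n], and define a k-graph H on [n] by: for i_1 < i_2 < ... < i_k, the set e = {i_1,...,i_k} is an edge of H iff {i_2,...,i_k} ∉ G^{k-1} and every other (k-1)-subset of e is in G^{k-1}. If H contains the tight cycle C_s^k as a subhypergraph, then s is divisible by k. -/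
/-- let `G` be a `(k-1)`-graph on `[n]` and let `H` be the `k`-graph where
a `k`-set `e = {i₁ < i₂ < … < i_k}` is an edge iff `{i₂, …, i_k} ∉ G` (the `(k-1)`-subset
omitting the minimum) and every other `(k-1)`-subset of `e` is in `G`.  Then any tight
cycle `C_s^k` contained in `H` has length divisible by `k`. -/
theorem stmt10 (n k s : ℕ) (hk : 3 ≤ k) (hks : k ≤ s)
    (G : Set (Finset (Fin n))) (hG : ∀ e ∈ G, e.card = k - 1)
    (H : Finset (Fin n) → Prop)
    (hH : ∀ e : Finset (Fin n), H e ↔ (e.card = k ∧ ∃ x ∈ e, (∀ y ∈ e, x ≤ y) ∧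
      e.erase x ∉ G ∧ ∀ z ∈ e, z ≠ x → e.erase z ∈ G))
    (φ : ZMod s → Fin n) (hinj : Function.Injective φ)
    (hcyc : ∀ i : ZMod s, H ((Finset.range k).image fun j : ℕ => φ (i + (j : ZMod s)))) :
    k ∣ s := by
  have hs0 : 0 < s := by omega
  haveI : NeZero s := ⟨hs0.ne'⟩
  -- natCast injectivity on [0, s)
  have hcast : ∀ a b : ℕ, a < s → b < s → ((a : ZMod s) = (b : ZMod s)) → a = b := by
    intro a b ha hb hab
    have := congrArg ZMod.val hab
    rwa [ZMod.val_cast_of_lt ha, ZMod.val_cast_of_lt hb] at this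
  set e : ZMod s → Finset (Fin n) :=
    fun i => (Finset.range k).image fun j : ℕ => φ (i + (j : ZMod s)) with he
  -- distinctness within a window of length ≤ s
  have hdist : ∀ (i : ZMod s) (a b : ℕ), a < s → b < s →
      φ (i + (a : ZMod s)) = φ (i + (b : ZMod s)) → a = b := by
    intro i a b ha hb hab
    exact hcast a b ha hb (by have := hinj hab; exact add_left_cancel this)
  -- membership characterization
  have hmem : ∀ (i : ZMod s) (x : Fin n), x ∈ e i ↔ ∃ j < k, x = φ (i + (j : ZMod s)) := by
    intro i x
    simp only [he, Finset.mem_image, Finset.mem_range]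
    constructor
    · rintro ⟨j, hj, rfl⟩; exact ⟨j, hj, rfl⟩
    · rintro ⟨j, hj, rfl⟩; exact ⟨j, hj, rfl⟩
  have hedge : ∀ i, (e i).card = k ∧ ∃ x ∈ e i, (∀ y ∈ e i, x ≤ y) ∧
      (e i).erase x ∉ G ∧ ∀ z ∈ e i, z ≠ x → (e i).erase z ∈ G := fun i => (hH _).1 (hcyc i)
  choose _hcard x hxmem hxmin hxnotG hxG using hedge
  -- the position of the minimum
  have hx' : ∀ i, ∃ j, j < k ∧ x i = φ (i + (j : ZMod s)) := by
    intro i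
    obtain ⟨j, hj, hxe⟩ := (hmem i (x i)).1 (hxmem i)
    exact ⟨j, hj, hxe⟩
  choose m hm hxm using hx'
  -- the shared (k-1)-set
  set S : ZMod s → Finset (Fin n) :=
    fun i => (Finset.range (k - 1)).image fun j : ℕ => φ (i + ((1 + j : ℕ) : ZMod s)) with hS
  have hE0 : ∀ i, (e i).erase (φ i) = S i := by
    intro i
    ext a
    simp only [Finset.mem_erase, hmem, hS, Finset.mem_image, Finset.mem_range]
    constructor
    · rintro ⟨hne, j, hj, rfl⟩
      have hj0 : j ≠ 0 := by
        rintro rfl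
        simp at hne
      refine ⟨j - 1, by omega, ?_⟩
      rw [show (1 + (j - 1) : ℕ) = j by omega]
    · rintro ⟨j, hj, rfl⟩
      refine ⟨?_, 1 + j, by omega, rfl⟩
      intro hcon
      have : 1 + j = 0 := hdist i (1 + j) 0 (by omega) (by omega)
        (by simpa using hcon)
      omega
  have hE1 : ∀ i, (e (i + 1)).erase (φ ((i + 1) + ((k - 1 : ℕ) : ZMod s))) = S i := by
    intro i
    ext a
    simp only [Finset.mem_erase, hmem, hS, Finset.mem_image, Finset.mem_range]
    constructor
    · rintro ⟨hne, j, hj, rfl⟩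
      have hjk : j ≠ k - 1 := by
        rintro rfl
        exact hne rfl
      refine ⟨j, by omega, ?_⟩
      congr 1
      push_cast
      ring
    · rintro ⟨j, hj, rfl⟩
      constructor
      · intro hcon
        have : j = k - 1 := hdist (i + 1) j (k - 1) (by omega) (by omega)
          (by rw [← hcon]; congr 1; push_cast; ring)
        omega
      · exact ⟨j, by omega, by congr 1; push_cast; ring⟩
  -- the shared set is in G iff the erased vertex is not the minimum
  have hA0 : ∀ i, (S i ∈ G ↔ m i ≠ 0) := by
    intro i
    have hmem0 : φ i ∈ e i := (hmem i _).2 ⟨0, by omega, by simp⟩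
    constructor
    · intro hSG hm0
      apply hxnotG i
      rw [hxm i, hm0] at *
      simpa using (hE0 i ▸ hSG)
    · intro hm0
      rw [← hE0 i]
      apply hxG i _ hmem0
      intro hcon
      have hmi := hm i
      have : (0 : ℕ) = m i := hdist i 0 (m i) (by omega) (by omega)
        (by rw [← hxm i, ← hcon]; simp)
      omega
  have hA1 : ∀ i, (S i ∈ G ↔ m (i + 1) ≠ k - 1) := by
    intro i
    have hmem1 : φ ((i + 1) + ((k - 1 : ℕ) : ZMod s)) ∈ e (i + 1) :=
      (hmem _ _).2 ⟨k - 1, by omega, rfl⟩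
    constructor
    · intro hSG hm1
      apply hxnotG (i + 1)
      rw [hxm (i + 1), hm1]
      simpa using (hE1 i ▸ hSG)
    · intro hm1
      rw [← hE1 i]
      apply hxG (i + 1) _ hmem1
      intro hcon
      have hmi := hm (i + 1)
      have : (k - 1 : ℕ) = m (i + 1) := hdist (i + 1) (k - 1) (m (i + 1)) (by omega)
        (by omega) (by rw [← hxm (i + 1), ← hcon])
      omega
  -- step relation: m (i+1) follows m i
  have hstep0 : ∀ i, m i = 0 → m (i + 1) = k - 1 := by
    intro i h0
    by_contra hne
    have := (hA0 i).1 ((hA1 i).2 hne)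
    exact this h0
  have hstep1 : ∀ i, m i ≠ 0 → m (i + 1) = m i - 1 := by
    intro i h0
    have hSG : S i ∈ G := (hA0 i).2 h0
    have hm1 : m (i + 1) ≠ k - 1 := (hA1 i).1 hSG
    have hmi := hm i
    have hmi1 := hm (i + 1)
    have h1 : x (i + 1) ∈ e i := by
      rw [hxm (i + 1)]
      refine (hmem i _).2 ⟨1 + m (i + 1), by omega, ?_⟩
      congr 1
      push_cast
      ring
    have h2 : x i ∈ e (i + 1) := by
      rw [hxm i]
      refine (hmem (i + 1) _).2 ⟨m i - 1, by omega, ?_⟩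
      congr 1
      rw [show ((m i : ℕ) : ZMod s) = ((1 + (m i - 1) : ℕ) : ZMod s) by congr 1; omega]
      push_cast
      ring
    have heq : x (i + 1) = x i := le_antisymm (hxmin (i + 1) _ h2) (hxmin i _ h1)
    rw [hxm i, hxm (i + 1)] at heq
    have : (1 + m (i + 1) : ℕ) = m i := by
      refine hdist i _ _ (by omega) (by omega) ?_
      rw [← heq]
      congr 1
      push_cast
      ring
    omega
  -- iterate around the cycle
  have key : ∀ j : ℕ, (m ((j : ℕ) : ZMod s) + j) % k = m 0 % k := by
    intro j
    induction j with
    | zero => simp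
    | succ j ih =>
      have hcast' : (((j + 1 : ℕ)) : ZMod s) = ((j : ℕ) : ZMod s) + 1 := by push_cast; ring
      rw [hcast']
      by_cases h0 : m ((j : ℕ) : ZMod s) = 0
      · rw [hstep0 _ h0, ← ih, h0]
        rw [show k - 1 + (j + 1) = k + j by omega]
        simp [Nat.add_mod_left]
      · rw [hstep1 _ h0, ← ih]
        congr 1
        have := hm ((j : ℕ) : ZMod s)
        omega
  have hfin := key s
  rw [ZMod.natCast_self] at hfin
  have hmod : s ≡ 0 [MOD k] := Nat.ModEq.add_left_cancel' (m 0)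
    (show m 0 + s ≡ m 0 + 0 [MOD k] by simpa [Nat.ModEq] using hfin)
  exact (Nat.modEq_zero_iff_dvd).1 hmod
end

section
/- For every t there exists a partial Steiner triple system S on a vertex set of size t (a collection of 3-element subsets in which every pair of vertices is contained in at most one triple) with |S| ≥ t^2/7, for all sufficiently large t. -/
open Finset

lemma stmt14_aux (t : ℕ) [NeZero t] (ht : 21 ≤ t) :
    ∃ S : Finset (Finset (Fin t)),
      (∀ e ∈ S, e.card = 3) ∧
      (∀ e ∈ S, ∀ f ∈ S, e ≠ f → (e ∩ f).card ≤ 1) ∧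
      (t : ℝ) ^ 2 / 7 ≤ (S.card : ℝ) := by
  classical
  set S : Finset (Finset (Fin t)) :=
    univ.filter (fun e => e.card = 3 ∧ ∑ x ∈ e, x = 0) with hSdef
  refine ⟨S, fun e he => ((mem_filter.1 he).2).1, ?_, ?_⟩
  · -- linearity: any two triples meet in at most one point
    intro e he f hf hef
    by_contra hcon
    push_neg at hcon
    have he3 : e.card = 3 := ((mem_filter.1 he).2).1
    have hf3 : f.card = 3 := ((mem_filter.1 hf).2).1
    have hes : ∑ x ∈ e, x = 0 := ((mem_filter.1 he).2).2
    have hfs : ∑ x ∈ f, x = 0 := ((mem_filter.1 hf).2).2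
    have hle : (e ∩ f).card ≤ 3 := le_trans (card_le_card inter_subset_left) he3.le
    have h2 : 2 ≤ (e ∩ f).card := hcon
    have hne3 : (e ∩ f).card ≠ 3 := by
      intro h3
      have hef1 : e ∩ f = e := eq_of_subset_of_card_le inter_subset_left (by omega)
      have hsub : e ⊆ f := inter_eq_left.1 hef1
      exact hef (eq_of_subset_of_card_le hsub (by omega))
    have h2' : (e ∩ f).card = 2 := by omega
    -- pick the extra elements
    have hce : (e \ (e ∩ f)).Nonempty := by
      rw [← card_pos, card_sdiff_of_subset inter_subset_left]; omega
    have hdf : (f \ (e ∩ f)).Nonempty := by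
      rw [← card_pos, card_sdiff_of_subset inter_subset_right]; omega
    obtain ⟨c, hc⟩ := hce
    obtain ⟨d, hd⟩ := hdf
    rw [mem_sdiff] at hc hd
    have hce' : e = insert c (e ∩ f) := by
      refine (eq_of_subset_of_card_le (insert_subset hc.1 inter_subset_left) ?_).symm
      rw [card_insert_of_notMem hc.2]; omega
    have hdf' : f = insert d (e ∩ f) := by
      refine (eq_of_subset_of_card_le (insert_subset hd.1 inter_subset_right) ?_).symm
      rw [card_insert_of_notMem hd.2]; omega
    rw [hce', sum_insert hc.2] at hes
    rw [hdf', sum_insert hd.2] at hfs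
    have hcd : c = d := by
      have := hes.trans hfs.symm
      exact add_right_cancel this
    have : c ∈ e ∩ f := mem_inter.2 ⟨hc.1, hcd ▸ hd.1⟩
    exact hc.2 this
  · -- counting
    set g : Fin t × Fin t → Finset (Fin t) := fun p => {p.1, p.2, -(p.1 + p.2)} with hgdef
    set P : Finset (Fin t × Fin t) :=
      univ.filter (fun p => p.1 ≠ p.2 ∧ p.1 ≠ -(p.1 + p.2) ∧ p.2 ≠ -(p.1 + p.2)) with hPdef
    have hgcard : ∀ p ∈ P, (g p).card = 3 := by
      intro p hp
      obtain ⟨-, h1, h2, h3⟩ := mem_filter.1 hp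
      show (insert p.1 (insert p.2 ({-(p.1 + p.2)} : Finset (Fin t)))).card = 3
      rw [card_insert_of_notMem (by
          simp only [mem_insert, mem_singleton, not_or]; exact ⟨h1, h2⟩),
        card_insert_of_notMem (by simp only [mem_singleton]; exact h3), card_singleton]
    have hgS : ∀ p ∈ P, g p ∈ S := by
      intro p hp
      obtain ⟨-, h1, h2, h3⟩ := mem_filter.1 hp
      refine mem_filter.2 ⟨mem_univ _, hgcard p hp, ?_⟩
      show ∑ x ∈ insert p.1 (insert p.2 ({-(p.1 + p.2)} : Finset (Fin t))), x = 0
      rw [sum_insert (by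
          simp only [mem_insert, mem_singleton, not_or]; exact ⟨h1, h2⟩),
        sum_insert (by simp only [mem_singleton]; exact h3), sum_singleton]
      abel
    have hmain : P.card ≤ 6 * (P.image g).card := by
      apply card_le_mul_card_image
      intro a ha
      have ha3 : a.card = 3 := by
        obtain ⟨p, hp, rfl⟩ := mem_image.1 ha
        exact hgcard p hp
      have hsub : P.filter (fun p => g p = a) ⊆ a.offDiag := by
        intro p hp
        obtain ⟨hpP, hga⟩ := mem_filter.1 hp
        have h1 : p.1 ∈ g p := by simp [hgdef]
        have h2 : p.2 ∈ g p := by simp [hgdef]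
        have hne : p.1 ≠ p.2 := (mem_filter.1 hpP).2.1
        rw [mem_offDiag]
        exact ⟨hga ▸ h1, hga ▸ h2, hne⟩
      calc (P.filter (fun p => g p = a)).card ≤ a.offDiag.card := card_le_card hsub
        _ = 6 := by rw [offDiag_card, ha3]
    -- lower bound on |P|
    set B1 : Finset (Fin t × Fin t) := univ.filter (fun p => p.1 = p.2) with hB1def
    set B2 : Finset (Fin t × Fin t) := univ.filter (fun p => p.1 = -(p.1 + p.2)) with hB2def
    set B3 : Finset (Fin t × Fin t) := univ.filter (fun p => p.2 = -(p.1 + p.2)) with hB3def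
    have hB1 : B1.card ≤ t := by
      have : B1 ⊆ univ.image (fun x : Fin t => (x, x)) := by
        intro p hp
        have h := (mem_filter.1 hp).2
        exact mem_image.2 ⟨p.1, mem_univ _, by ext <;> simp [h]⟩
      calc B1.card ≤ (univ.image (fun x : Fin t => (x, x))).card := card_le_card this
        _ ≤ (univ : Finset (Fin t)).card := card_image_le
        _ = t := by simp
    have hB2 : B2.card ≤ t := by
      have : B2 ⊆ univ.image (fun x : Fin t => (x, -(x + x))) := by
        intro p hp
        have h := (mem_filter.1 hp).2
        have h2 : p.2 = -(p.1 + p.1) := by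
          rw [eq_neg_iff_add_eq_zero] at h ⊢; rw [← h]; abel
        exact mem_image.2 ⟨p.1, mem_univ _, by ext <;> simp [h2]⟩
      calc B2.card ≤ (univ.image (fun x : Fin t => (x, -(x + x)))).card := card_le_card this
        _ ≤ (univ : Finset (Fin t)).card := card_image_le
        _ = t := by simp
    have hB3 : B3.card ≤ t := by
      have : B3 ⊆ univ.image (fun x : Fin t => (-(x + x), x)) := by
        intro p hp
        have h := (mem_filter.1 hp).2
        have h2 : p.1 = -(p.2 + p.2) := by
          rw [eq_neg_iff_add_eq_zero] at h ⊢; rw [← h]; abel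
        exact mem_image.2 ⟨p.2, mem_univ _, by ext <;> simp [h2]⟩
      calc B3.card ≤ (univ.image (fun x : Fin t => (-(x + x), x))).card := card_le_card this
        _ ≤ (univ : Finset (Fin t)).card := card_image_le
        _ = t := by simp
    have hPsub : univ \ (B1 ∪ B2 ∪ B3) ⊆ P := by
      intro p hp
      rw [mem_sdiff] at hp
      have := hp.2
      simp only [hB1def, hB2def, hB3def, mem_union, mem_filter, mem_univ, true_and] at this
      push_neg at this
      exact mem_filter.2 ⟨mem_univ _, this.1.1, this.1.2, this.2⟩
    have hPcard : t * t - 3 * t ≤ P.card := by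
      have hU : (univ : Finset (Fin t × Fin t)).card = t * t := by simp
      have hBu : (B1 ∪ B2 ∪ B3).card ≤ 3 * t := by
        calc (B1 ∪ B2 ∪ B3).card ≤ (B1 ∪ B2).card + B3.card := card_union_le _ _
          _ ≤ B1.card + B2.card + B3.card := by
              have := card_union_le B1 B2; omega
          _ ≤ 3 * t := by omega
      have hsd : (univ : Finset (Fin t × Fin t)).card - (B1 ∪ B2 ∪ B3).card
          ≤ (univ \ (B1 ∪ B2 ∪ B3)).card := le_card_sdiff _ _
      have := card_le_card hPsub
      omega
    have himg : (P.image g).card ≤ S.card := card_le_card (image_subset_iff.2 hgS)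
    have h1 : t * t - 3 * t ≤ 6 * S.card := by omega
    have h33 : 3 * t ≤ t * t := by nlinarith
    have h3 : (t : ℝ) * t - 3 * t ≤ 6 * S.card := by
      have := (Nat.cast_le (α := ℝ)).2 h1
      rw [Nat.cast_sub h33] at this
      push_cast at this ⊢
      linarith
    have h21 : (21 : ℝ) ≤ t := by exact_mod_cast ht
    rw [div_le_iff₀ (by norm_num)]
    nlinarith [h3, h21]

/-- for all sufficiently large `t` there is a partial Steiner triple system
`S` on a `t`-element vertex set (a family of 3-element sets, any two of which meet in at
most one vertex) with `|S| ≥ t²/7`. -/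
theorem stmt14 : ∀ᶠ t : ℕ in Filter.atTop,
    ∃ S : Finset (Finset (Fin t)),
      (∀ e ∈ S, e.card = 3) ∧
      (∀ e ∈ S, ∀ f ∈ S, e ≠ f → (e ∩ f).card ≤ 1) ∧
      (t : ℝ) ^ 2 / 7 ≤ (S.card : ℝ) := by
  filter_upwards [Filter.eventually_ge_atTop 21] with t ht
  haveI : NeZero t := ⟨by omega⟩
  exact stmt14_aux t ht
end

section
/- There is a constant c > 0 such that for all sufficiently large n there exists a 3-graph H on n vertices with independence number α(H) < c log n such that every tight cycle C_s^3 contained in H has length s divisible by 3. -/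
open Finset

namespace Stmt16

/-- The edge predicate: `e` is an edge iff it has 3 elements and for every ordering
`(a,b,c)` of `e`, `Φ (b,c) = Φ (a,b) + 1`. -/
def good (n : ℕ) (Φ : Fin n × Fin n → ZMod 3) (e : Finset (Fin n)) : Prop :=
  e.card = 3 ∧ ∀ a b c : Fin n, a ∈ e → b ∈ e → c ∈ e →
    a ≠ b → a ≠ c → b ≠ c → Φ (b, c) = Φ (a, b) + 1

instance (n : ℕ) (Φ : Fin n × Fin n → ZMod 3) : DecidablePred (good n Φ) := fun e => by
  unfold good; infer_instance

lemma zadd1 : ∀ r : ZMod 3, r = r + 2 + 1 := by decide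

lemma zadd2 : ∀ r : ZMod 3, r + 2 = r + 1 + 1 := by decide

lemma good_of_values {n : ℕ} (Φ : Fin n × Fin n → ZMod 3) (u v w : Fin n)
    (huv : u ≠ v) (huw : u ≠ w) (hvw : v ≠ w)
    (h1 : Φ (v, w) = Φ (u, v) + 1) (h2 : Φ (w, u) = Φ (u, v) + 2)
    (h3 : Φ (u, w) = Φ (v, u) + 1) (h4 : Φ (w, v) = Φ (v, u) + 2) :
    good n Φ ({u, v, w} : Finset (Fin n)) := by
  constructor
  · rw [card_insert_of_notMem (by simp [huv, huw]),
      card_insert_of_notMem (by simp [hvw]), card_singleton]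
  · intro x y z hx hy hz hxy hxz hyz
    simp only [mem_insert, mem_singleton] at hx hy hz
    rcases hx with rfl | rfl | rfl <;> rcases hy with rfl | rfl | rfl <;>
      rcases hz with rfl | rfl | rfl <;>
        first
          | exact absurd rfl hxy
          | exact absurd rfl hxz
          | exact absurd rfl hyz
          | (simp only [h1, h2, h3, h4]
             all_goals first
               | rfl
               | exact zadd1 _
               | exact zadd2 _)

/-- Divisibility: any tight cycle in a `good`-hypergraph has length divisible by 3. -/
lemma dvd_of_cycle {n s : ℕ} (hs : 3 ≤ s) (Φ : Fin n × Fin n → ZMod 3)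
    (φ : ZMod s → Fin n) (hinj : Function.Injective φ)
    (hcyc : ∀ i : ZMod s, good n Φ ({φ i, φ (i + 1), φ (i + 2)} : Finset (Fin n))) :
    3 ∣ s := by
  haveI : NeZero s := ⟨by omega⟩
  have hne : ∀ a b : ℕ, a < s → b < s → a ≠ b → (a : ZMod s) ≠ (b : ZMod s) := by
    intro a b ha hb hab h
    have := congrArg ZMod.val h
    rw [ZMod.val_natCast_of_lt ha, ZMod.val_natCast_of_lt hb] at this
    exact hab this
  have h10 : (1 : ZMod s) ≠ 0 := by
    have := hne 1 0 (by omega) (by omega) (by omega)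
    simpa using this
  have h20 : (2 : ZMod s) ≠ 0 := by
    have := hne 2 0 (by omega) (by omega) (by omega)
    simpa using this
  have h12 : (1 : ZMod s) ≠ 2 := by
    have := hne 1 2 (by omega) (by omega) (by omega)
    simpa using this
  have step : ∀ i : ZMod s, Φ (φ (i + 1), φ (i + 2)) = Φ (φ i, φ (i + 1)) + 1 := by
    intro i
    have hg := hcyc i
    refine hg.2 (φ i) (φ (i + 1)) (φ (i + 2)) (by simp) (by simp) (by simp) ?_ ?_ ?_
    · exact fun h => h10 (by simpa using (left_eq_add.mp (hinj h)))
    · exact fun h => h20 (by simpa using (left_eq_add.mp (hinj h)))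
    · intro h
      have h' : i + 1 = i + 2 := hinj h
      exact h12 (by exact add_left_cancel h')
  have key : ∀ k : ℕ,
      Φ (φ (k : ZMod s), φ ((k : ZMod s) + 1)) = Φ (φ 0, φ 1) + (k : ZMod 3) := by
    intro k
    induction k with
    | zero => simp
    | succ k ih =>
        have hc : ((k + 1 : ℕ) : ZMod s) = (k : ZMod s) + 1 := by push_cast; ring
        rw [hc]
        have h2' : (k : ZMod s) + 1 + 1 = (k : ZMod s) + 2 := by ring
        rw [h2', step, ih]
        push_cast
        ring
  have hs0 := key s
  rw [ZMod.natCast_self] at hs0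
  simp only [zero_add] at hs0
  exact (ZMod.natCast_eq_zero_iff s 3).mp (left_eq_add.mp hs0)


abbrev W3 : Type := ZMod 3 × ZMod 3 × ZMod 3 × ZMod 3

lemma cardW3 : Fintype.card W3 = 81 := by simp

noncomputable def χ : W3 ≃ Fin 81 := Fintype.equivFinOfCardEq cardW3

noncomputable def encode (v w : W3) : Fin 80 :=
  if h : (χ v).1 < (χ w).1 then ⟨(χ v).1, by have := (χ w).isLt; omega⟩
  else ⟨(χ v).1 - 1, by have := (χ v).isLt; omega⟩

lemma encode_inj {v₁ v₂ w : W3} (h₁ : v₁ ≠ w) (h₂ : v₂ ≠ w)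
    (h : encode v₁ w = encode v₂ w) : v₁ = v₂ := by
  have e₁ : (χ v₁).1 ≠ (χ w).1 := fun hc => h₁ (χ.injective (Fin.ext hc))
  have e₂ : (χ v₂).1 ≠ (χ w).1 := fun hc => h₂ (χ.injective (Fin.ext hc))
  have hval := congrArg Fin.val h
  unfold encode at hval
  split_ifs at hval <;>
    (apply χ.injective; apply Fin.ext; simp only [] at hval; omega)

section Counting

variable (n m : ℕ) (T : Finset (Fin n)) (hT : T.card = 3 * m)

def emb (x : Fin (3 * m)) : Fin n := ((T.orderIsoOfFin hT) x : Fin n)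

lemma emb_mem (x : Fin (3 * m)) : emb n m T hT x ∈ T := ((T.orderIsoOfFin hT) x).2

lemma emb_eq_iff {x y : Fin (3 * m)} :
    emb n m T hT x = emb n m T hT y ↔ (x : ℕ) = (y : ℕ) := by
  constructor
  · intro h
    have := (T.orderIsoOfFin hT).injective (Subtype.ext h)
    exact congrArg Fin.val this
  · intro h
    have : x = y := Fin.ext h
    rw [this]

def av (j : Fin m) : Fin n := emb n m T hT ⟨(j : ℕ), by have := j.isLt; omega⟩
def bv (j : Fin m) : Fin n := emb n m T hT ⟨m + (j : ℕ), by have := j.isLt; omega⟩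
def cv (i : Fin m) : Fin n := emb n m T hT ⟨2 * m + (i : ℕ), by have := i.isLt; omega⟩

lemma av_mem (j : Fin m) : av n m T hT j ∈ T := emb_mem _ _ _ _ _
lemma bv_mem (j : Fin m) : bv n m T hT j ∈ T := emb_mem _ _ _ _ _
lemma cv_mem (i : Fin m) : cv n m T hT i ∈ T := emb_mem _ _ _ _ _

lemma av_ne_bv (j j' : Fin m) : av n m T hT j ≠ bv n m T hT j' := by
  intro h
  have h' := (emb_eq_iff n m T hT).mp h
  have := j.isLt; have := j'.isLt
  simp only [] at h'
  omega

lemma av_ne_cv (j i : Fin m) : av n m T hT j ≠ cv n m T hT i := by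
  intro h
  have h' := (emb_eq_iff n m T hT).mp h
  have := j.isLt; have := i.isLt
  simp only [] at h'
  omega

lemma bv_ne_cv (j i : Fin m) : bv n m T hT j ≠ cv n m T hT i := by
  intro h
  have h' := (emb_eq_iff n m T hT).mp h
  have := j.isLt; have := i.isLt
  simp only [] at h'
  omega

def K : (Fin m × Fin m) × Fin 4 → Fin n × Fin n
  | ⟨⟨i, j⟩, ⟨0, _⟩⟩ => (bv n m T hT j, cv n m T hT i)
  | ⟨⟨i, j⟩, ⟨1, _⟩⟩ => (cv n m T hT i, av n m T hT j)
  | ⟨⟨i, j⟩, ⟨2, _⟩⟩ => (av n m T hT j, cv n m T hT i)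
  | ⟨⟨i, j⟩, ⟨_ + 3, _⟩⟩ => (cv n m T hT i, bv n m T hT j)

lemma K_inj : Function.Injective (K n m T hT) := by
  rintro ⟨⟨i, j⟩, ⟨d, hd⟩⟩ ⟨⟨i', j'⟩, ⟨d', hd'⟩⟩ h
  have hi := i.isLt; have hj := j.isLt; have hi' := i'.isLt; have hj' := j'.isLt
  interval_cases d <;> interval_cases d' <;>
      simp only [K, Prod.mk.injEq, av, bv, cv, emb_eq_iff] at h <;>
    first
      | (exfalso; omega)
      | (obtain ⟨h1, h2⟩ := h
         have hii : i = i' := Fin.ext (by omega)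
         have hjj : j = j' := Fin.ext (by omega)
         subst hii; subst hjj; rfl)

def Bs : Finset (Fin n × Fin n) := (univ : Finset ((Fin m × Fin m) × Fin 4)).image (K n m T hT)

lemma card_Bs : (Bs n m T hT).card = 4 * (m * m) := by
  rw [Bs, card_image_of_injective _ (K_inj n m T hT), card_univ]
  simp only [Fintype.card_prod, Fintype.card_fin]
  ring

lemma ab_not_mem (j : Fin m) : (av n m T hT j, bv n m T hT j) ∉ Bs n m T hT := by
  intro hmem
  obtain ⟨⟨⟨i', j'⟩, ⟨d, hd⟩⟩, -, h⟩ := mem_image.mp hmem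
  have hi' := i'.isLt; have hj' := j'.isLt; have hj := j.isLt
  interval_cases d <;>
    simp only [K, Prod.mk.injEq, av, bv, cv, emb_eq_iff] at h <;> omega

lemma ba_not_mem (j : Fin m) : (bv n m T hT j, av n m T hT j) ∉ Bs n m T hT := by
  intro hmem
  obtain ⟨⟨⟨i', j'⟩, ⟨d, hd⟩⟩, -, h⟩ := mem_image.mp hmem
  have hi' := i'.isLt; have hj' := j'.isLt; have hj := j.isLt
  interval_cases d <;>
    simp only [K, Prod.mk.injEq, av, bv, cv, emb_eq_iff] at h <;> omega

end Counting



section Counting2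

variable (n m : ℕ) (T : Finset (Fin n))

def blockvec (hT : T.card = 3 * m) (Φ : Fin n × Fin n → ZMod 3) (ij : Fin m × Fin m) : W3 :=
  (Φ (bv n m T hT ij.2, cv n m T hT ij.1), Φ (cv n m T hT ij.1, av n m T hT ij.2),
   Φ (av n m T hT ij.2, cv n m T hT ij.1), Φ (cv n m T hT ij.1, bv n m T hT ij.2))

def goodvec (hT : T.card = 3 * m) (Φ : Fin n × Fin n → ZMod 3) (ij : Fin m × Fin m) : W3 :=
  (Φ (av n m T hT ij.2, bv n m T hT ij.2) + 1, Φ (av n m T hT ij.2, bv n m T hT ij.2) + 2,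
   Φ (bv n m T hT ij.2, av n m T hT ij.2) + 1, Φ (bv n m T hT ij.2, av n m T hT ij.2) + 2)

lemma good_of_block_eq (hT : T.card = 3 * m) (Φ : Fin n × Fin n → ZMod 3) (ij : Fin m × Fin m)
    (h : blockvec n m T hT Φ ij = goodvec n m T hT Φ ij) :
    good n Φ ({av n m T hT ij.2, bv n m T hT ij.2, cv n m T hT ij.1} : Finset (Fin n)) := by
  simp only [blockvec, goodvec, Prod.mk.injEq] at h
  obtain ⟨h1, h2, h3, h4⟩ := h
  exact good_of_values Φ _ _ _ (av_ne_bv n m T hT _ _) (av_ne_cv n m T hT _ _)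
    (bv_ne_cv n m T hT _ _) h1 h2 h3 h4

/-- The per-`T` counting bound. -/
lemma badT_card (hT : T.card = 3 * m) (h4 : 4 * (m * m) ≤ n * n) :
    (univ.filter fun Φ : Fin n × Fin n → ZMod 3 =>
        ∀ e ∈ T.powersetCard 3, ¬ good n Φ e).card
      ≤ 3 ^ (n * n - 4 * (m * m)) * 80 ^ (m * m) := by
  classical
  set Bc : Finset (Fin n × Fin n) := (Bs n m T hT)ᶜ with hBc
  set F : (Fin n × Fin n → ZMod 3) →
      ({x // x ∈ Bc} → ZMod 3) × ((Fin m × Fin m) → Fin 80) :=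
    fun Φ => (fun p => Φ p.1,
      fun ij => encode (blockvec n m T hT Φ ij) (goodvec n m T hT Φ ij)) with hF
  -- membership gives block ≠ goodvec
  have hkey : ∀ Φ ∈ (univ.filter fun Φ : Fin n × Fin n → ZMod 3 =>
      ∀ e ∈ T.powersetCard 3, ¬ good n Φ e), ∀ ij : Fin m × Fin m,
      blockvec n m T hT Φ ij ≠ goodvec n m T hT Φ ij := by
    intro Φ hΦ ij h
    have hfree := (mem_filter.mp hΦ).2
    refine hfree {av n m T hT ij.2, bv n m T hT ij.2, cv n m T hT ij.1} ?_
      (good_of_block_eq n m T hT Φ ij h)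
    rw [mem_powersetCard]
    constructor
    · intro x hx
      simp only [mem_insert, mem_singleton] at hx
      rcases hx with rfl | rfl | rfl
      · exact av_mem n m T hT _
      · exact bv_mem n m T hT _
      · exact cv_mem n m T hT _
    · exact (good_of_block_eq n m T hT Φ ij h).1
  have hinjOn : Set.InjOn F ((univ.filter fun Φ : Fin n × Fin n → ZMod 3 =>
      ∀ e ∈ T.powersetCard 3, ¬ good n Φ e) : Finset _) := by
    intro Φ₁ hΦ₁ Φ₂ hΦ₂ heq
    have hoff : ∀ p : Fin n × Fin n, p ∉ Bs n m T hT → Φ₁ p = Φ₂ p := by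
      intro p hp
      have := congrFun (congrArg Prod.fst heq) ⟨p, by simpa [hBc] using hp⟩
      simpa using this
    have hgv : ∀ ij : Fin m × Fin m,
        goodvec n m T hT Φ₁ ij = goodvec n m T hT Φ₂ ij := by
      intro ij
      have e1 := hoff _ (ab_not_mem n m T hT ij.2)
      have e2 := hoff _ (ba_not_mem n m T hT ij.2)
      simp only [goodvec, e1, e2]
    have hbv : ∀ ij : Fin m × Fin m,
        blockvec n m T hT Φ₁ ij = blockvec n m T hT Φ₂ ij := by
      intro ij
      have h2 := congrFun (congrArg Prod.snd heq) ij
      simp only [hF] at h2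
      have k1 := hkey Φ₁ hΦ₁ ij
      have k2 := hkey Φ₂ hΦ₂ ij
      rw [hgv ij] at h2 k1
      exact encode_inj k1 k2 h2
    funext p
    by_cases hp : p ∈ Bs n m T hT
    · obtain ⟨⟨⟨i, j⟩, ⟨d, hd⟩⟩, -, rfl⟩ := mem_image.mp hp
      have hb := hbv (i, j)
      simp only [blockvec, Prod.mk.injEq] at hb
      obtain ⟨e1, e2, e3, e4⟩ := hb
      interval_cases d <;> simp only [K] <;> assumption
    · exact hoff p hp
  have hcard := card_le_card_of_injOn F (fun Φ _ => mem_univ (F Φ)) hinjOn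
  rw [card_univ] at hcard
  refine hcard.trans (le_of_eq ?_)
  rw [Fintype.card_prod, Fintype.card_fun, Fintype.card_fun]
  have hBccard : Fintype.card {x // x ∈ Bc} = n * n - 4 * (m * m) := by
    rw [Fintype.card_coe, hBc, card_compl, card_Bs n m T hT]
    congr 1
    simp [Fintype.card_prod, Fintype.card_fin]
  rw [hBccard]
  have : Fintype.card (ZMod 3) = 3 := by simp
  rw [this]
  have : Fintype.card (Fin m × Fin m) = m * m := by
    simp [Fintype.card_prod, Fintype.card_fin]
  rw [this]
  simp

end Counting2

/-- Existence of a pair-colouring in which every `3m`-set contains a good triple. -/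
lemma exists_goodPhi (n m : ℕ) (h4 : 4 * (m * m) ≤ n * n)
    (hcount : n.choose (3 * m) * 80 ^ (m * m) < 81 ^ (m * m)) :
    ∃ Φ : Fin n × Fin n → ZMod 3, ∀ T : Finset (Fin n), T.card = 3 * m →
      ∃ e ∈ T.powersetCard 3, good n Φ e := by
  classical
  by_contra hcon
  push_neg at hcon
  -- every Φ is bad for some T
  have hsub : (univ : Finset (Fin n × Fin n → ZMod 3)) ⊆
      ((univ : Finset (Fin n)).powersetCard (3 * m)).biUnion (fun T =>
        univ.filter fun Φ : Fin n × Fin n → ZMod 3 =>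
          ∀ e ∈ T.powersetCard 3, ¬ good n Φ e) := by
    intro Φ _
    obtain ⟨T, hTcard, hTfree⟩ := hcon Φ
    refine mem_biUnion.mpr ⟨T, ?_, ?_⟩
    · rw [mem_powersetCard]
      exact ⟨subset_univ T, hTcard⟩
    · rw [mem_filter]
      exact ⟨mem_univ _, fun e he hg => hTfree e he hg⟩
  have hb := (card_le_card hsub).trans (card_biUnion_le (s := (univ : Finset (Fin n)).powersetCard (3 * m))
    (t := fun T => univ.filter fun Φ : Fin n × Fin n → ZMod 3 =>
      ∀ e ∈ T.powersetCard 3, ¬ good n Φ e))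
  have hsum : ∑ T ∈ (univ : Finset (Fin n)).powersetCard (3 * m), (univ.filter fun Φ : Fin n × Fin n → ZMod 3 =>
      ∀ e ∈ T.powersetCard 3, ¬ good n Φ e).card
      ≤ ∑ T ∈ (univ : Finset (Fin n)).powersetCard (3 * m), 3 ^ (n * n - 4 * (m * m)) * 80 ^ (m * m) := by
    apply Finset.sum_le_sum
    intro T hT
    exact badT_card n m T (mem_powersetCard.mp hT).2 h4
  rw [Finset.sum_const, card_powersetCard, card_univ, Fintype.card_fin] at hsum
  have htot : (univ : Finset (Fin n × Fin n → ZMod 3)).card = 3 ^ (n * n) := by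
    rw [card_univ, Fintype.card_fun]
    simp [Fintype.card_prod, Fintype.card_fin]
  have hlt : n.choose (3 * m) • (3 ^ (n * n - 4 * (m * m)) * 80 ^ (m * m)) < 3 ^ (n * n) := by
    rw [smul_eq_mul]
    have hpoweq : (3 : ℕ) ^ (n * n) = 3 ^ (n * n - 4 * (m * m)) * 81 ^ (m * m) := by
      have h81 : (81 : ℕ) ^ (m * m) = 3 ^ (4 * (m * m)) := by
        rw [show (81 : ℕ) = 3 ^ 4 from rfl, ← pow_mul]
      rw [h81, ← pow_add]
      congr 1
      omega
    rw [hpoweq]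
    calc n.choose (3 * m) * (3 ^ (n * n - 4 * (m * m)) * 80 ^ (m * m))
        = 3 ^ (n * n - 4 * (m * m)) * (n.choose (3 * m) * 80 ^ (m * m)) := by ring
      _ < 3 ^ (n * n - 4 * (m * m)) * 81 ^ (m * m) := by
          exact (Nat.mul_lt_mul_left (by positivity)).mpr hcount
  have := (hb.trans hsum)
  rw [htot] at this
  omega


lemma h360 : ∀ L : ℕ, 32 ≤ L → 360 * (L + 1) ≤ 2 ^ L := by
  intro L hL
  induction L, hL using Nat.le_induction with
  | base => norm_num
  | succ L hL ih =>
      have hA : 360 ≤ 2 ^ L := le_trans (by norm_num) (Nat.pow_le_pow_right (by norm_num) hL)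
      rw [pow_succ]
      omega

end Stmt16

set_option maxRecDepth 40000 in
set_option maxHeartbeats 1000000 in
/-- there is `c > 0` such that for all sufficiently large `n` there is a
3-graph `H` on `n` vertices with independence number less than `c log n` in which every
tight cycle `C_s^3` has length `s` divisible by 3. -/
theorem stmt16 : ∃ c : ℝ, 0 < c ∧ ∀ᶠ n : ℕ in Filter.atTop,
    ∃ H : Set (Finset (Fin n)),
      (∀ e ∈ H, e.card = 3) ∧
      (∀ T : Finset (Fin n), (∀ e ∈ T.powersetCard 3, e ∉ H) →
        (T.card : ℝ) < c * Real.log n) ∧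
      (∀ s : ℕ, 3 ≤ s →
        (∃ φ : ZMod s → Fin n, Function.Injective φ ∧
          ∀ i : ZMod s, ({φ i, φ (i + 1), φ (i + 2)} : Finset (Fin n)) ∈ H) →
        3 ∣ s) := by
  classical
  refine ⟨10000, by norm_num, ?_⟩
  rw [Filter.eventually_atTop]
  refine ⟨2 ^ 32, fun n hn => ?_⟩
  set L := Nat.log 2 n with hL
  set m := 180 * (L + 1) with hm
  have hn0 : 0 < n := lt_of_lt_of_le (by norm_num) hn
  have hL32 : 32 ≤ L := by
    have := Nat.log_mono_right (b := 2) hn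
    rwa [Nat.log_pow (by norm_num)] at this
  have hpow_le : 2 ^ L ≤ n := Nat.pow_log_le_self 2 hn0.ne'
  have hltn : n < 2 ^ (L + 1) := Nat.lt_pow_succ_log_self (by norm_num) n
  have h2m : 2 * m ≤ n := by
    calc 2 * m = 360 * (L + 1) := by rw [hm]; ring
      _ ≤ 2 ^ L := Stmt16.h360 L hL32
      _ ≤ n := hpow_le
  have h4 : 4 * (m * m) ≤ n * n := by
    have he : 4 * (m * m) = (2 * m) * (2 * m) := by ring
    rw [he]; exact Nat.mul_le_mul h2m h2m
  have hm0 : m ≠ 0 := by omega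
  have hstep : n ^ 3 * 80 ^ m < 81 ^ m := by
    have hkey60 : 2 * 80 ^ 60 ≤ 81 ^ 60 := by norm_num
    have hexp : m = 60 * (3 * (L + 1)) := by rw [hm]; ring
    have e81 : (81 : ℕ) ^ m = (81 ^ 60) ^ (3 * (L + 1)) := by rw [hexp, pow_mul]
    have e80 : (80 : ℕ) ^ m = (80 ^ 60) ^ (3 * (L + 1)) := by rw [hexp, pow_mul]
    have h2p : (2 : ℕ) ^ (3 * (L + 1)) = (2 ^ (L + 1)) ^ 3 := by
      rw [← pow_mul, Nat.mul_comm]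
    calc n ^ 3 * 80 ^ m < (2 ^ (L + 1)) ^ 3 * 80 ^ m := by
          exact (Nat.mul_lt_mul_right (by positivity)).mpr
            (Nat.pow_lt_pow_left hltn (by norm_num))
      _ = 2 ^ (3 * (L + 1)) * (80 ^ 60) ^ (3 * (L + 1)) := by rw [h2p, e80]
      _ ≤ (81 ^ 60) ^ (3 * (L + 1)) := by
          rw [← mul_pow]
          exact Nat.pow_le_pow_left hkey60 _
      _ = 81 ^ m := e81.symm
  have hcount : n.choose (3 * m) * 80 ^ (m * m) < 81 ^ (m * m) := by
    calc n.choose (3 * m) * 80 ^ (m * m) ≤ n ^ (3 * m) * 80 ^ (m * m) :=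
          Nat.mul_le_mul_right _ (Nat.choose_le_pow n (3 * m))
      _ = (n ^ 3 * 80 ^ m) ^ m := by rw [mul_pow, ← pow_mul, ← pow_mul]
      _ < (81 ^ m) ^ m := Nat.pow_lt_pow_left hstep hm0
      _ = 81 ^ (m * m) := by rw [← pow_mul]
  obtain ⟨Φ, hΦ⟩ := Stmt16.exists_goodPhi n m h4 hcount
  refine ⟨{e | Stmt16.good n Φ e}, ?_, ?_, ?_⟩
  · exact fun e he => he.1
  · intro T hTind
    have hTcard : T.card < 3 * m := by
      by_contra hc
      push_neg at hc
      obtain ⟨T', hT'sub, hT'card⟩ := Finset.exists_subset_card_eq hc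
      obtain ⟨e, he, hgood⟩ := hΦ T' hT'card
      have heT : e ∈ T.powersetCard 3 := by
        rw [Finset.mem_powersetCard] at he ⊢
        exact ⟨he.1.trans hT'sub, he.2⟩
      exact hTind e heT hgood
    have hlog2 : (0.6931471803 : ℝ) < Real.log 2 := Real.log_two_gt_d9
    have hlogn2 : Real.log 2 ≤ Real.log n := by
      apply Real.log_le_log (by norm_num)
      exact_mod_cast (show (2 : ℕ) ≤ n by omega)
    have hLreal : (L : ℝ) * Real.log 2 ≤ Real.log n := by
      have hcast : ((2 : ℝ)) ^ L ≤ (n : ℝ) := by exact_mod_cast hpow_le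
      have := Real.log_le_log (by positivity) hcast
      rwa [Real.log_pow] at this
    have hLn : (L : ℝ) ≤ 2 * Real.log n := by
      have hL0 : (0 : ℝ) ≤ (L : ℝ) := Nat.cast_nonneg L
      linarith only [hLreal, hlog2, hL0, mul_le_mul_of_nonneg_left hlog2.le hL0]
    calc (T.card : ℝ) < ((3 * m : ℕ) : ℝ) := by exact_mod_cast hTcard
      _ = 540 * ((L : ℝ) + 1) := by rw [hm]; push_cast; ring
      _ ≤ 10000 * Real.log n := by linarith only [hLn, hlogn2, hlog2]
  · rintro s hs ⟨φ, hφinj, hφcyc⟩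
    exact Stmt16.dvd_of_cycle hs Φ φ hφinj hφcyc
end

section
/- Define posets J_i inductively: J_1 is the disjoint union of a chain of size 1 and a chain of size t−k (elements from different chains incomparable), and for i ≥ 1, J_{i+1} is the set of order ideals (down-sets) of J_i ordered by inclusion. Then J_3 contains an antichain of size Ω(t), hence |J_4| = 2^{Ω(t)}, and more generally |J_ℓ| = t_{ℓ−2}(Ω(t)) for all ℓ ≥ 3, where t_1(x) = x and t_{i+1}(x) = 2^{t_i(x)} is the tower function. -/
/-- Tower function: `towerFn 0 x = x` and `towerFn (i+1) x = 2 ^ towerFn i x`.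
(The paper's `t_i` is `towerFn (i-1)`.) -/
def towerFn : ℕ → ℕ → ℕ
  | 0, x => x
  | i + 1, x => 2 ^ towerFn i x

/-- The posets `J_i` (indexed from 0, so `J t k (i-1)` is the paper's `J_i`):
`J_1` is the disjoint union of a chain of size 1 and a chain of size `t - k`
(elements of different chains incomparable), and `J_{i+1}` is the poset of
order ideals (down-sets) of `J_i`, ordered by inclusion. -/
def J (t k : ℕ) : ℕ → (α : Type) × PartialOrder α
  | 0 => ⟨Fin 1 ⊕ Fin (t - k), inferInstance⟩
  | i + 1 =>
    letI := (J t k i).2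
    ⟨LowerSet (J t k i).1, inferInstance⟩

/-- The order relation of `J t k i`. -/
def Jle (t k i : ℕ) (a b : (J t k i).1) : Prop := (J t k i).2.le a b

/-- A "strong antichain" family: any `r`-relation between members forces equal indices. -/
def SAnti {P : Type*} {ι : Type*} (r : P → P → Prop) (f : ι → P) : Prop :=
  ∀ i j, r (f i) (f j) → i = j

lemma SAnti.injective {P ι : Type*} [Preorder P] {f : ι → P}
    (h : SAnti (· ≤ ·) f) : Function.Injective f :=
  fun i j hij => h i j (le_of_eq hij)

lemma SAnti.comp {P ι κ : Type*} {r : P → P → Prop} {f : ι → P} (h : SAnti r f) {e : κ → ι}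
    (he : Function.Injective e) : SAnti r (f ∘ e) :=
  fun i j hij => he (h _ _ hij)

lemma SAnti.step {P : Type*} [PartialOrder P] {ι : Type*} {f : ι × Bool → P}
    (hf : SAnti (· ≤ ·) f) :
    SAnti (· ≤ ·) (fun g : ι → Bool =>
      (lowerClosure (Set.range fun i => f (i, g i)) : LowerSet P)) := by
  intro g g' h
  funext i
  have h1 : f (i, g i) ∈ lowerClosure (Set.range fun i => f (i, g i)) :=
    subset_lowerClosure ⟨i, rfl⟩
  have h2 : f (i, g i) ∈ lowerClosure (Set.range fun i => f (i, g' i)) := h h1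
  obtain ⟨y, ⟨j, rfl⟩, hle⟩ := h2
  have h0 := hf _ _ hle
  have h3 : i = j := congrArg Prod.fst h0
  have h4 : g i = g' j := congrArg Prod.snd h0
  rw [h4, h3]

lemma finiteJ (t k i : ℕ) : Finite (J t k i).1 := by
  induction i with
  | zero => exact inferInstanceAs (Finite (Fin 1 ⊕ Fin (t - k)))
  | succ i ih =>
    letI := (J t k i).2
    haveI := ih
    have : Finite (LowerSet (J t k i).1) :=
      Finite.of_injective (fun S => (SetLike.coe S : Set (J t k i).1)) SetLike.coe_injective
    exact this

lemma towerFn_strictMono (n : ℕ) : StrictMono (towerFn n) := by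
  induction n with
  | zero => exact strictMono_id
  | succ n ih =>
    intro x y hxy
    exact Nat.pow_lt_pow_right one_lt_two (ih hxy)

lemma tower_double (n x : ℕ) (hx : 2 ≤ x) : 2 * towerFn n (x / 2) ≤ towerFn n x := by
  induction n with
  | zero => show 2 * (x / 2) ≤ x; omega
  | succ n _ =>
    have h1 : towerFn n (x / 2) < towerFn n x :=
      towerFn_strictMono n (by omega)
    calc 2 * 2 ^ towerFn n (x / 2) = 2 ^ (towerFn n (x / 2) + 1) := by
          rw [pow_succ, mul_comm]
      _ ≤ 2 ^ towerFn n x := Nat.pow_le_pow_right (by norm_num) (by omega)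

lemma base (t k : ℕ) (ht : 4 * k + 16 ≤ t) :
    ∃ f : Fin (t / 4) → (J t k 2).1, SAnti (Jle t k 2) f := by
  set m := t - k with hm
  have h2n : 2 * (t / 4) + 1 ≤ m := by omega
  have hidx : ∀ j : Fin (t / 4), (j : ℕ) < m := by
    intro j; have := j.2; omega
  have hidx' : ∀ j : Fin (t / 4), m - 1 - (j : ℕ) < m := by
    intro j; have := j.2; omega
  let A0 : LowerSet (Fin 1 ⊕ Fin m) := LowerSet.Iic (Sum.inl 0)
  let B : Fin m → LowerSet (Fin 1 ⊕ Fin m) := fun c => LowerSet.Iic (Sum.inr c)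
  let U : Fin (t / 4) → LowerSet (LowerSet (Fin 1 ⊕ Fin m)) := fun j =>
    LowerSet.Iic (A0 ⊔ B ⟨j, hidx j⟩) ⊔ LowerSet.Iic (B ⟨m - 1 - j, hidx' j⟩)
  refine ⟨U, ?_⟩
  intro j j' (h : U j ≤ U j')
  by_contra hne
  have hne' : (j : ℕ) ≠ (j' : ℕ) := fun h' => hne (Fin.ext h')
  rcases Nat.lt_or_ge (j : ℕ) (j' : ℕ) with hlt | hge
  · -- witness B (m-1-j)
    have hw : B ⟨m - 1 - j, hidx' j⟩ ∈ U j := by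
      rw [LowerSet.mem_sup_iff]
      exact Or.inr (LowerSet.mem_Iic_iff.2 le_rfl)
    have hw' : B ⟨m - 1 - j, hidx' j⟩ ∈ U j' := h hw
    rw [LowerSet.mem_sup_iff, LowerSet.mem_Iic_iff, LowerSet.mem_Iic_iff] at hw'
    rcases hw' with h1 | h1
    · have hmem : (Sum.inr ⟨m - 1 - j, hidx' j⟩ : Fin 1 ⊕ Fin m) ∈ A0 ⊔ B ⟨j', hidx j'⟩ :=
        h1 (LowerSet.mem_Iic_iff.2 le_rfl)
      rw [LowerSet.mem_sup_iff, LowerSet.mem_Iic_iff, LowerSet.mem_Iic_iff] at hmem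
      rcases hmem with h2 | h2
      · exact Sum.not_inr_le_inl h2
      · have h3 : m - 1 - (j : ℕ) ≤ (j' : ℕ) := Fin.mk_le_mk.1 (Sum.inr_le_inr_iff.1 h2)
        have hj2 := j.2; have hj'2 := j'.2
        omega
    · have hmem : (Sum.inr ⟨m - 1 - j, hidx' j⟩ : Fin 1 ⊕ Fin m) ∈
          B ⟨m - 1 - j', hidx' j'⟩ := h1 (LowerSet.mem_Iic_iff.2 le_rfl)
      rw [LowerSet.mem_Iic_iff] at hmem
      have : m - 1 - (j : ℕ) ≤ m - 1 - (j' : ℕ) := Fin.mk_le_mk.1 (Sum.inr_le_inr_iff.1 hmem)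
      have hj2 := j.2; have hj'2 := j'.2
      omega
  · -- j' < j; witness A0 ⊔ B j
    have hlt' : (j' : ℕ) < (j : ℕ) := by omega
    have hw : A0 ⊔ B ⟨j, hidx j⟩ ∈ U j := by
      rw [LowerSet.mem_sup_iff]
      exact Or.inl (LowerSet.mem_Iic_iff.2 le_rfl)
    have hw' : A0 ⊔ B ⟨j, hidx j⟩ ∈ U j' := h hw
    rw [LowerSet.mem_sup_iff, LowerSet.mem_Iic_iff, LowerSet.mem_Iic_iff] at hw'
    rcases hw' with h1 | h1
    · have hx : (Sum.inr ⟨j, hidx j⟩ : Fin 1 ⊕ Fin m) ∈ A0 ⊔ B ⟨j, hidx j⟩ :=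
        LowerSet.mem_sup_iff.2 (Or.inr (LowerSet.mem_Iic_iff.2 le_rfl))
      have hmem : (Sum.inr ⟨j, hidx j⟩ : Fin 1 ⊕ Fin m) ∈ A0 ⊔ B ⟨j', hidx j'⟩ := h1 hx
      rw [LowerSet.mem_sup_iff, LowerSet.mem_Iic_iff, LowerSet.mem_Iic_iff] at hmem
      rcases hmem with h2 | h2
      · exact Sum.not_inr_le_inl h2
      · have : (j : ℕ) ≤ (j' : ℕ) := Fin.mk_le_mk.1 (Sum.inr_le_inr_iff.1 h2)
        omega
    · have hx : (Sum.inl 0 : Fin 1 ⊕ Fin m) ∈ A0 ⊔ B ⟨j, hidx j⟩ :=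
        LowerSet.mem_sup_iff.2 (Or.inl (LowerSet.mem_Iic_iff.2 le_rfl))
      have hmem : (Sum.inl 0 : Fin 1 ⊕ Fin m) ∈ B ⟨m - 1 - j', hidx' j'⟩ := h1 hx
      exact Sum.not_inl_le_inr (LowerSet.mem_Iic_iff.1 hmem)

lemma mainQ (k : ℕ) (n : ℕ) : ∃ c : ℕ, 0 < c ∧ ∀ᶠ t : ℕ in Filter.atTop,
    ∃ f : Fin (towerFn n (t / c)) → (J t k (n + 2)).1, SAnti (Jle t k (n + 2)) f := by
  induction n with
  | zero =>
    refine ⟨4, by norm_num, ?_⟩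
    filter_upwards [Filter.eventually_ge_atTop (4 * k + 16)] with t ht
    exact base t k ht
  | succ n ih =>
    obtain ⟨c, hc, hev⟩ := ih
    refine ⟨2 * c, by positivity, ?_⟩
    filter_upwards [hev, Filter.eventually_ge_atTop (2 * c)] with t htf h2c
    obtain ⟨f, hf⟩ := htf
    letI := (J t k (n + 2)).2
    set a := towerFn n (t / (2 * c)) with ha
    have hdd : t / (2 * c) = t / c / 2 := by
      rw [Nat.div_div_eq_div_mul, mul_comm]
    have hx2 : 2 ≤ t / c := (Nat.le_div_iff_mul_le hc).2 (by omega)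
    have hab : 2 * a ≤ towerFn n (t / c) := by
      rw [ha, hdd]; exact tower_double n (t / c) hx2
    let e : Fin a × Bool → Fin (towerFn n (t / c)) := fun p =>
      ⟨2 * p.1 + p.2.toNat, by
        have := p.1.2
        cases p.2 <;> simp [Bool.toNat] <;> omega⟩
    have he : Function.Injective e := by
      rintro ⟨i, b⟩ ⟨i', b'⟩ hcd
      have hval : 2 * i.val + b.toNat = 2 * i'.val + b'.toNat := congrArg Fin.val hcd
      have hi : i.val = i'.val ∧ b.toNat = b'.toNat := by
        cases b <;> cases b' <;> simp [Bool.toNat] at hval ⊢ <;> omega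
      have : b = b' := by cases b <;> cases b' <;> simp [Bool.toNat] at hi ⊢ <;> tauto
      exact Prod.ext (Fin.ext hi.1) this
    have hf' : SAnti (· ≤ ·) (f ∘ e) := SAnti.comp (r := (· ≤ ·)) hf he
    have hstep := SAnti.step (P := (J t k (n + 2)).1) hf'
    let g : Fin (2 ^ a) → (Fin a → Bool) := fun x i => x.val.testBit i
    have hg : Function.Injective g := by
      intro x y hxy
      apply Fin.ext
      apply Nat.eq_of_testBit_eq
      intro i
      by_cases hi : i < a
      · exact congrFun hxy ⟨i, hi⟩
      · have hxlt : x.val < 2 ^ i :=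
          lt_of_lt_of_le x.2 (Nat.pow_le_pow_right (by norm_num) (by omega))
        have hylt : y.val < 2 ^ i :=
          lt_of_lt_of_le y.2 (Nat.pow_le_pow_right (by norm_num) (by omega))
        rw [Nat.testBit_eq_false_of_lt hxlt, Nat.testBit_eq_false_of_lt hylt]
    exact ⟨_, SAnti.comp (r := (· ≤ ·)) hstep hg⟩

/-- `J_3` contains an antichain of size `Ω(t)`, hence `|J_4| = 2^{Ω(t)}`,
and in general `|J_ℓ| ≥ t_{ℓ-2}(Ω(t))` for all `ℓ ≥ 3`. -/
theorem stmt17 (k : ℕ) (hk : 3 ≤ k) :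
    (∃ c : ℕ, 0 < c ∧ ∀ᶠ t : ℕ in Filter.atTop,
      ∃ A : Set (J t k 2).1, IsAntichain (Jle t k 2) A ∧ t / c ≤ A.ncard) ∧
    (∃ c : ℕ, 0 < c ∧ ∀ᶠ t : ℕ in Filter.atTop,
      2 ^ (t / c) ≤ Nat.card (J t k 3).1) ∧
    (∀ ℓ : ℕ, 3 ≤ ℓ → ∃ c : ℕ, 0 < c ∧ ∀ᶠ t : ℕ in Filter.atTop,
      towerFn (ℓ - 3) (t / c) ≤ Nat.card (J t k (ℓ - 1)).1) := by
  have key : ∀ n : ℕ, ∃ c : ℕ, 0 < c ∧ ∀ᶠ t : ℕ in Filter.atTop,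
      towerFn n (t / c) ≤ Nat.card (J t k (n + 2)).1 := by
    intro n
    obtain ⟨c, hc, hev⟩ := mainQ k n
    refine ⟨c, hc, ?_⟩
    filter_upwards [hev] with t ht
    obtain ⟨f, hf⟩ := ht
    letI := (J t k (n + 2)).2
    haveI := finiteJ t k (n + 2)
    have hinj : Function.Injective f := SAnti.injective hf
    calc towerFn n (t / c) = Nat.card (Fin (towerFn n (t / c))) := by simp
      _ ≤ Nat.card (J t k (n + 2)).1 := Nat.card_le_card_of_injective f hinj
  refine ⟨?_, ?_, ?_⟩
  · obtain ⟨c, hc, hev⟩ := mainQ k 0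
    refine ⟨c, hc, ?_⟩
    filter_upwards [hev] with t ht
    obtain ⟨f, hf⟩ := ht
    letI := (J t k 2).2
    have hinj : Function.Injective f := SAnti.injective hf
    refine ⟨Set.range f, ?_, ?_⟩
    · rintro _ ⟨i, rfl⟩ _ ⟨j, rfl⟩ hab hle
      exact hab (congrArg f (hf i j hle))
    · have : (Set.range f).ncard = t / c := by
        rw [← Set.image_univ, Set.ncard_image_of_injective _ hinj, Set.ncard_univ]
        simp [towerFn]
      omega
  · obtain ⟨c, hc, hev⟩ := key 1
    exact ⟨c, hc, hev⟩
  · intro ℓ hℓ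
    obtain ⟨c, hc, hev⟩ := key (ℓ - 3)
    refine ⟨c, hc, ?_⟩
    have hℓ' : ℓ - 3 + 2 = ℓ - 1 := by omega
    rw [hℓ'] at hev
    exact hev
end
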